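/- arXiv:1710.02501 — 2 statements merged into one kernel-verified Lean document; each statement's English description precedes it below -/
import Mathlib

section
/- Let r ≥ 2 and let (P,ℒ) be an r-uniform linear system with 2-packing number ν₂ = 4 and maximum degree Δ = 3. Then (r+1)·τ ≤ |P| + |ℒ| (equivalently, τ ≤ (|P| + |ℒ|)/(r+1)), where τ is the transversal number. -/
open Finset

/-- `(P, L)` is a linear system: lines are nonempty subsets of the point set `P`,
and any two distinct lines share at most one point. -/
def IsLinearSystem {α : Type*} [DecidableEq α] (P : Finset α) (L : Finset (Finset α)) : Prop :=
  (∀ l ∈ L, l.Nonempty) ∧ (∀ l ∈ L, l ⊆ P) ∧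
    ∀ l ∈ L, ∀ l' ∈ L, l ≠ l' → (l ∩ l').card ≤ 1

/-- `T` is a transversal of the linear system `(P, L)`. -/
def IsTransversal {α : Type*} [DecidableEq α] (P : Finset α) (L : Finset (Finset α))
    (T : Finset α) : Prop :=
  T ⊆ P ∧ ∀ l ∈ L, (T ∩ l).Nonempty

/-- The transversal number `τ` of `(P, L)`. -/
noncomputable def tau {α : Type*} [DecidableEq α] (P : Finset α) (L : Finset (Finset α)) : ℕ :=
  sInf {n | ∃ T : Finset α, IsTransversal P L T ∧ T.card = n}

/-- `R` is a 2-packing of `L`: no three distinct lines of `R` have a common point. -/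
def Is2Packing {α : Type*} [DecidableEq α] (L R : Finset (Finset α)) : Prop :=
  R ⊆ L ∧ ∀ l₁ ∈ R, ∀ l₂ ∈ R, ∀ l₃ ∈ R,
    l₁ ≠ l₂ → l₁ ≠ l₃ → l₂ ≠ l₃ → l₁ ∩ l₂ ∩ l₃ = ∅

/-- The 2-packing number `ν₂` of `(P, L)`. -/
noncomputable def nu2 {α : Type*} [DecidableEq α] (L : Finset (Finset α)) : ℕ :=
  sSup {n | ∃ R : Finset (Finset α), Is2Packing L R ∧ R.card = n}

/-- The degree of a point `p`: the number of lines containing `p`. -/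
def degree {α : Type*} [DecidableEq α] (L : Finset (Finset α)) (p : α) : ℕ :=
  (L.filter fun l => p ∈ l).card

/-- The maximum degree `Δ` over all points of `P`. -/
def maxDegree {α : Type*} [DecidableEq α] (P : Finset α) (L : Finset (Finset α)) : ℕ :=
  P.sup (degree L)

namespace Stmt10

/-- Full standing context: a system plus a degree-3 point `q` with its pencil. -/
structure Cfg (α : Type*) [DecidableEq α] where
  P : Finset α
  L : Finset (Finset α)
  r : ℕ
  hr : 2 ≤ r
  hne : ∀ l ∈ L, l.Nonempty
  hsub : ∀ l ∈ L, l ⊆ P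
  hlin : ∀ l ∈ L, ∀ l' ∈ L, l ≠ l' → (l ∩ l').card ≤ 1
  hunif : ∀ l ∈ L, l.card = r
  hnu : nu2 L = 4
  hdeg : maxDegree P L = 3
  q : α
  m1 : Finset α
  m2 : Finset α
  m3 : Finset α
  hm1 : m1 ∈ L
  hm2 : m2 ∈ L
  hm3 : m3 ∈ L
  hqm1 : q ∈ m1
  hqm2 : q ∈ m2
  hqm3 : q ∈ m3
  hm12 : m1 ≠ m2
  hm13 : m1 ≠ m3
  hm23 : m2 ≠ m3
  pencil : ∀ l ∈ L, q ∈ l → l = m1 ∨ l = m2 ∨ l = m3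

variable {α : Type*} [DecidableEq α] (C : Cfg α)

lemma Cfg.hqP : C.q ∈ C.P := C.hsub _ C.hm1 C.hqm1

/-- every point of the ground set has degree at most 3 -/
lemma Cfg.deg_le {x : α} (hx : x ∈ C.P) : degree C.L x ≤ 3 := by
  have := Finset.le_sup (f := degree C.L) hx
  rw [show C.P.sup (degree C.L) = maxDegree C.P C.L from rfl, C.hdeg] at this
  exact this

/-- no point lies on four distinct lines -/
lemma Cfg.degfour {x : α} {A B D E : Finset α}
    (hA : A ∈ C.L) (hB : B ∈ C.L) (hD : D ∈ C.L) (hE : E ∈ C.L)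
    (hAB : A ≠ B) (hAD : A ≠ D) (hAE : A ≠ E) (hBD : B ≠ D) (hBE : B ≠ E) (hDE : D ≠ E)
    (hxA : x ∈ A) (hxB : x ∈ B) (hxD : x ∈ D) (hxE : x ∈ E) : False := by
  have hxP : x ∈ C.P := C.hsub _ hA hxA
  have hsub4 : ({A, B, D, E} : Finset (Finset α)) ⊆ C.L.filter (fun l => x ∈ l) := by
    intro l hl
    simp only [mem_insert, mem_singleton] at hl
    rcases hl with rfl | rfl | rfl | rfl <;> simp [Finset.mem_filter, *]
  have hc4 : ({A, B, D, E} : Finset (Finset α)).card = 4 := by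
    rw [card_insert_of_notMem (by simp [hAB, hAD, hAE]),
      card_insert_of_notMem (by simp [hBD, hBE]),
      card_insert_of_notMem (by simp [hDE]), card_singleton]
  have := Finset.card_le_card hsub4
  rw [hc4] at this
  have h3 := C.deg_le hxP
  unfold degree at h3
  omega

/-- two distinct lines through a common point intersect exactly there -/
lemma Cfg.inter_eq {x : α} {l l' : Finset α} (hl : l ∈ C.L) (hl' : l' ∈ C.L)
    (hne : l ≠ l') (hx : x ∈ l) (hx' : x ∈ l') : l ∩ l' = {x} := by
  have h1 := C.hlin l hl l' hl' hne
  have hxm : x ∈ l ∩ l' := mem_inter.2 ⟨hx, hx'⟩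
  apply Finset.eq_singleton_iff_unique_mem.2
  refine ⟨hxm, fun y hy => ?_⟩
  by_contra hne'
  have : ({y, x} : Finset α) ⊆ l ∩ l' := by
    intro z hz; simp only [mem_insert, mem_singleton] at hz
    rcases hz with rfl | rfl <;> assumption
  have := Finset.card_le_card this
  rw [card_insert_of_notMem (by simp [hne']), card_singleton] at this
  omega

/-- any 2-packing has at most 4 lines -/
lemma Cfg.pack_le {R : Finset (Finset α)} (h : Is2Packing C.L R) : R.card ≤ 4 := by
  have hb : BddAbove {n | ∃ R : Finset (Finset α), Is2Packing C.L R ∧ R.card = n} := by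
    refine ⟨C.L.card, fun n hn => ?_⟩
    obtain ⟨R', hR', rfl⟩ := hn
    exact Finset.card_le_card hR'.1
  have := le_csSup hb ⟨R, h, rfl⟩
  rw [show sSup {n | ∃ R : Finset (Finset α), Is2Packing C.L R ∧ R.card = n} = nu2 C.L from rfl,
    C.hnu] at this
  exact this

lemma emp3 {A B D : Finset α} (h : ∀ x, x ∈ A → x ∈ B → x ∈ D → False) : A ∩ B ∩ D = ∅ := by
  apply Finset.eq_empty_iff_forall_notMem.2
  intro x hx
  simp only [mem_inter] at hx
  exact h x hx.1.1 hx.1.2 hx.2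

set_option maxHeartbeats 2000000 in
/-- The central tool: five lines, all (unordered) triples with empty intersection, contradict ν₂ = 4. -/
lemma Cfg.no5 {A B D E F : Finset α}
    (hA : A ∈ C.L) (hB : B ∈ C.L) (hD : D ∈ C.L) (hE : E ∈ C.L) (hF : F ∈ C.L)
    (nAB : A ≠ B) (nAD : A ≠ D) (nAE : A ≠ E) (nAF : A ≠ F)
    (nBD : B ≠ D) (nBE : B ≠ E) (nBF : B ≠ F)
    (nDE : D ≠ E) (nDF : D ≠ F) (nEF : E ≠ F)
    (tABD : ∀ x, x ∈ A → x ∈ B → x ∈ D → False)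
    (tABE : ∀ x, x ∈ A → x ∈ B → x ∈ E → False)
    (tABF : ∀ x, x ∈ A → x ∈ B → x ∈ F → False)
    (tADE : ∀ x, x ∈ A → x ∈ D → x ∈ E → False)
    (tADF : ∀ x, x ∈ A → x ∈ D → x ∈ F → False)
    (tAEF : ∀ x, x ∈ A → x ∈ E → x ∈ F → False)
    (tBDE : ∀ x, x ∈ B → x ∈ D → x ∈ E → False)
    (tBDF : ∀ x, x ∈ B → x ∈ D → x ∈ F → False)
    (tBEF : ∀ x, x ∈ B → x ∈ E → x ∈ F → False)
    (tDEF : ∀ x, x ∈ D → x ∈ E → x ∈ F → False) : False := by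
  have hpack : Is2Packing C.L {A, B, D, E, F} := by
    constructor
    · intro l hl
      simp only [mem_insert, mem_singleton] at hl
      rcases hl with rfl | rfl | rfl | rfl | rfl <;> assumption
    · intro l1 h1 l2 h2 l3 h3 n12 n13 n23
      simp only [mem_insert, mem_singleton] at h1 h2 h3
      rcases h1 with rfl | rfl | rfl | rfl | rfl <;>
        rcases h2 with rfl | rfl | rfl | rfl | rfl <;>
          rcases h3 with rfl | rfl | rfl | rfl | rfl <;>
            first
              | exact absurd rfl (by assumption)
              | (apply emp3; intro x hx1 hx2 hx3; solve_by_elim)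
  have hcard : ({A, B, D, E, F} : Finset (Finset α)).card = 5 := by
    rw [card_insert_of_notMem (by simp [nAB, nAD, nAE, nAF]),
      card_insert_of_notMem (by simp [nBD, nBE, nBF]),
      card_insert_of_notMem (by simp [nDE, nDF]),
      card_insert_of_notMem (by simp [nEF]), card_singleton]
  have := C.pack_le hpack
  omega


lemma Cfg.tau_le {T : Finset α} (hT : IsTransversal C.P C.L T) : tau C.P C.L ≤ T.card :=
  Nat.sInf_le ⟨T, hT, rfl⟩

/-- |P| ≥ 3r - 2 -/
lemma Cfg.p_count : 3 * C.r ≤ C.P.card + 2 := by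
  have h12 := Finset.card_union_add_card_inter C.m1 C.m2
  have e12 : C.m1 ∩ C.m2 = {C.q} := C.inter_eq C.hm1 C.hm2 C.hm12 C.hqm1 C.hqm2
  have h3 := Finset.card_union_add_card_inter (C.m1 ∪ C.m2) C.m3
  have hsub3 : (C.m1 ∪ C.m2) ∩ C.m3 ⊆ {C.q} := by
    intro x hx
    simp only [mem_inter, mem_union] at hx
    obtain ⟨h1 | h2, h3'⟩ := hx
    · have := C.inter_eq C.hm1 C.hm3 C.hm13 C.hqm1 C.hqm3
      have : x ∈ C.m1 ∩ C.m3 := mem_inter.2 ⟨h1, h3'⟩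
      rw [C.inter_eq C.hm1 C.hm3 C.hm13 C.hqm1 C.hqm3] at this
      exact this
    · have : x ∈ C.m2 ∩ C.m3 := mem_inter.2 ⟨h2, h3'⟩
      rw [C.inter_eq C.hm2 C.hm3 C.hm23 C.hqm2 C.hqm3] at this
      exact this
  have hc3 : ((C.m1 ∪ C.m2) ∩ C.m3).card ≤ 1 := by
    have := Finset.card_le_card hsub3
    simpa using this
  have hPsub : (C.m1 ∪ C.m2) ∪ C.m3 ⊆ C.P := by
    intro x hx
    simp only [mem_union] at hx
    rcases hx with (h | h) | h
    exacts [C.hsub _ C.hm1 h, C.hsub _ C.hm2 h, C.hsub _ C.hm3 h]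
  have hP := Finset.card_le_card hPsub
  have hu1 := C.hunif _ C.hm1
  have hu2 := C.hunif _ C.hm2
  have hu3 := C.hunif _ C.hm3
  have he12 : (C.m1 ∩ C.m2).card = 1 := by rw [e12]; simp
  omega

/-- |L| ≥ 5 -/
lemma Cfg.q_count5 : 5 ≤ C.L.card := by
  have hbdd : BddAbove {n | ∃ R : Finset (Finset α), Is2Packing C.L R ∧ R.card = n} := by
    refine ⟨C.L.card, fun n hn => ?_⟩
    obtain ⟨R', hR', rfl⟩ := hn
    exact Finset.card_le_card hR'.1
  have hne : {n | ∃ R : Finset (Finset α), Is2Packing C.L R ∧ R.card = n}.Nonempty := by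
    refine ⟨0, ∅, ⟨Finset.empty_subset _, ?_⟩, rfl⟩
    intro l1 h1; simp at h1
  have hmem := Nat.sSup_mem hne hbdd
  rw [show sSup {n | ∃ R : Finset (Finset α), Is2Packing C.L R ∧ R.card = n} = nu2 C.L from rfl,
    C.hnu] at hmem
  obtain ⟨R, hR, hRcard⟩ := hmem
  have : ¬(C.m1 ∈ R ∧ C.m2 ∈ R ∧ C.m3 ∈ R) := by
    rintro ⟨h1, h2, h3⟩
    have := hR.2 _ h1 _ h2 _ h3 C.hm12 C.hm13 C.hm23
    have hq : C.q ∈ C.m1 ∩ C.m2 ∩ C.m3 := by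
      simp [mem_inter, C.hqm1, C.hqm2, C.hqm3]
    rw [this] at hq
    simp at hq
  have : ∃ m, m ∈ C.L ∧ m ∉ R := by
    by_cases h1 : C.m1 ∈ R
    · by_cases h2 : C.m2 ∈ R
      · exact ⟨C.m3, C.hm3, fun h3 => this ⟨h1, h2, h3⟩⟩
      · exact ⟨C.m2, C.hm2, h2⟩
    · exact ⟨C.m1, C.hm1, h1⟩
  obtain ⟨m, hmL, hmR⟩ := this
  have hsub : insert m R ⊆ C.L := by
    intro l hl
    rcases mem_insert.1 hl with rfl | hl
    exacts [hmL, hR.1 hl]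
  have := Finset.card_le_card hsub
  rw [card_insert_of_notMem hmR] at this
  omega

/-- incidence double count: r|L| ≤ 3|P| -/
lemma Cfg.incidence : C.r * C.L.card ≤ 3 * C.P.card := by
  have key : ∑ l ∈ C.L, l.card = ∑ x ∈ C.P, degree C.L x := by
    have h1 : ∀ l ∈ C.L, l.card = ∑ x ∈ C.P, (if x ∈ l then 1 else 0) := by
      intro l hl
      have : C.P.filter (fun x => x ∈ l) = l := by
        ext x
        simp only [mem_filter]
        exact ⟨fun h => h.2, fun h => ⟨C.hsub _ hl h, h⟩⟩
      rw [← Finset.card_filter, this]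
    rw [Finset.sum_congr rfl h1, Finset.sum_comm]
    apply Finset.sum_congr rfl
    intro x _
    rw [degree, Finset.card_filter]
  have h2 : ∑ l ∈ C.L, l.card = C.r * C.L.card := by
    rw [Finset.sum_congr rfl C.hunif, Finset.sum_const, smul_eq_mul, mul_comm]
  have h3 : ∑ x ∈ C.P, degree C.L x ≤ ∑ x ∈ C.P, 3 := by
    apply Finset.sum_le_sum
    intro x hx
    exact C.deg_le hx
  rw [Finset.sum_const, smul_eq_mul, mul_comm] at h3
  omega

lemma Cfg.tau_le3 {s t : α} (hs : s ∈ C.P) (ht : t ∈ C.P)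
    (hcov : ∀ l ∈ C.L, C.q ∉ l → s ∈ l ∨ t ∈ l) : tau C.P C.L ≤ 3 := by
  have hT : IsTransversal C.P C.L (insert C.q {s, t}) := by
    constructor
    · intro x hx
      simp only [mem_insert, mem_singleton] at hx
      rcases hx with rfl | rfl | rfl
      exacts [C.hqP, hs, ht]
    · intro l hl
      by_cases hq : C.q ∈ l
      · exact ⟨C.q, mem_inter.2 ⟨by simp, hq⟩⟩
      · rcases hcov l hl hq with h | h
        · exact ⟨s, mem_inter.2 ⟨by simp, h⟩⟩
        · exact ⟨t, mem_inter.2 ⟨by simp, h⟩⟩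
  calc tau C.P C.L ≤ _ := C.tau_le hT
    _ ≤ 3 := by
        calc (insert C.q ({s, t} : Finset α)).card ≤ ({s, t} : Finset α).card + 1 := card_insert_le _ _
          _ ≤ (({t} : Finset α).card + 1) + 1 := by
              have := card_insert_le s ({t} : Finset α); omega
          _ ≤ 3 := by simp

/-- conclusion from a cover of the far lines by two points -/
lemma Cfg.cover2 {s t : α} (hs : s ∈ C.P) (ht : t ∈ C.P)
    (hcov : ∀ l ∈ C.L, C.q ∉ l → s ∈ l ∨ t ∈ l) :
    (C.r + 1) * tau C.P C.L ≤ C.P.card + C.L.card := by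
  have h3 := C.tau_le3 hs ht hcov
  have h1 : (C.r + 1) * tau C.P C.L ≤ (C.r + 1) * 3 := Nat.mul_le_mul_left _ h3
  have := C.p_count
  have := C.q_count5
  have hr := C.hr
  omega

lemma Cfg.tau_le4 {s t u : α} (hs : s ∈ C.P) (ht : t ∈ C.P) (hu : u ∈ C.P)
    (hcov : ∀ l ∈ C.L, C.q ∉ l → s ∈ l ∨ t ∈ l ∨ u ∈ l) : tau C.P C.L ≤ 4 := by
  have hT : IsTransversal C.P C.L (insert C.q {s, t, u}) := by
    constructor
    · intro x hx
      simp only [mem_insert, mem_singleton] at hx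
      rcases hx with rfl | rfl | rfl | rfl
      exacts [C.hqP, hs, ht, hu]
    · intro l hl
      by_cases hq : C.q ∈ l
      · exact ⟨C.q, mem_inter.2 ⟨by simp, hq⟩⟩
      · rcases hcov l hl hq with h | h | h
        · exact ⟨s, mem_inter.2 ⟨by simp, h⟩⟩
        · exact ⟨t, mem_inter.2 ⟨by simp, h⟩⟩
        · exact ⟨u, mem_inter.2 ⟨by simp, h⟩⟩
  calc tau C.P C.L ≤ _ := C.tau_le hT
    _ ≤ 4 := by
        calc (insert C.q ({s, t, u} : Finset α)).card ≤ ({s, t, u} : Finset α).card + 1 := card_insert_le _ _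
          _ ≤ (({t, u} : Finset α).card + 1) + 1 := by
              have := card_insert_le s ({t, u} : Finset α); omega
          _ ≤ ((({u} : Finset α).card + 1) + 1) + 1 := by
              have := card_insert_le t ({u} : Finset α); omega
          _ ≤ 4 := by simp

/-- conclusion from a cover of the far lines by three points, with the extra counting facts
`|L| ≥ 9` and `|P| ≥ 6r - 14`. -/
lemma Cfg.cover3 {s t u : α} (hs : s ∈ C.P) (ht : t ∈ C.P) (hu : u ∈ C.P)
    (hcov : ∀ l ∈ C.L, C.q ∉ l → s ∈ l ∨ t ∈ l ∨ u ∈ l)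
    (h9 : 9 ≤ C.L.card) (hp14 : 6 * C.r ≤ C.P.card + 14) :
    (C.r + 1) * tau C.P C.L ≤ C.P.card + C.L.card := by
  have h4 := C.tau_le4 hs ht hu hcov
  have h1 : (C.r + 1) * tau C.P C.L ≤ (C.r + 1) * 4 := Nat.mul_le_mul_left _ h4
  have hinc : C.r * 9 ≤ 3 * C.P.card := by
    calc C.r * 9 ≤ C.r * C.L.card := Nat.mul_le_mul_left _ h9
      _ ≤ 3 * C.P.card := C.incidence
  have hr := C.hr
  omega

lemma Cfg.nem {l : Finset α} (hl : l ∈ C.L) : l.Nonempty := C.hne l hl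

lemma Cfg.int1 {l l' : Finset α} (hl : l ∈ C.L) (hl' : l' ∈ C.L) (h : l ≠ l') :
    (l ∩ l').card ≤ 1 := C.hlin l hl l' hl' h

lemma Cfg.mem_of_or {m : Finset α} (h : m = C.m1 ∨ m = C.m2 ∨ m = C.m3) :
    m ∈ C.L ∧ C.q ∈ m := by
  rcases h with rfl | rfl | rfl
  exacts [⟨C.hm1, C.hqm1⟩, ⟨C.hm2, C.hqm2⟩, ⟨C.hm3, C.hqm3⟩]

/-- |m1 ∪ m2 ∪ m3| ≥ 3r - 2 -/
lemma Cfg.mcard : 3 * C.r ≤ (C.m1 ∪ C.m2 ∪ C.m3).card + 2 := by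
  have h12 := Finset.card_union_add_card_inter C.m1 C.m2
  have e12 : C.m1 ∩ C.m2 = {C.q} := C.inter_eq C.hm1 C.hm2 C.hm12 C.hqm1 C.hqm2
  have h3 := Finset.card_union_add_card_inter (C.m1 ∪ C.m2) C.m3
  have hsub3 : (C.m1 ∪ C.m2) ∩ C.m3 ⊆ {C.q} := by
    intro x hx
    simp only [mem_inter, mem_union] at hx
    obtain ⟨h1 | h2, h3'⟩ := hx
    · have : x ∈ C.m1 ∩ C.m3 := mem_inter.2 ⟨h1, h3'⟩
      rw [C.inter_eq C.hm1 C.hm3 C.hm13 C.hqm1 C.hqm3] at this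
      exact this
    · have : x ∈ C.m2 ∩ C.m3 := mem_inter.2 ⟨h2, h3'⟩
      rw [C.inter_eq C.hm2 C.hm3 C.hm23 C.hqm2 C.hqm3] at this
      exact this
  have hc3 : ((C.m1 ∪ C.m2) ∩ C.m3).card ≤ 1 := by
    have := Finset.card_le_card hsub3; simpa using this
  have hu1 := C.hunif _ C.hm1
  have hu2 := C.hunif _ C.hm2
  have hu3 := C.hunif _ C.hm3
  have he12 : (C.m1 ∩ C.m2).card = 1 := by rw [e12]; simp
  omega

/-- a line avoiding `q` meets `m1 ∪ m2 ∪ m3` in at most 3 points -/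
lemma Cfg.inter3 {l : Finset α} (hl : l ∈ C.L) (hql : C.q ∉ l) :
    (l ∩ (C.m1 ∪ C.m2 ∪ C.m3)).card ≤ 3 := by
  have h1 : l ≠ C.m1 := by rintro rfl; exact hql C.hqm1
  have h2 : l ≠ C.m2 := by rintro rfl; exact hql C.hqm2
  have h3 : l ≠ C.m3 := by rintro rfl; exact hql C.hqm3
  have hsu : l ∩ (C.m1 ∪ C.m2 ∪ C.m3) ⊆ (l ∩ C.m1) ∪ (l ∩ C.m2) ∪ (l ∩ C.m3) := by
    intro x hx
    simp only [mem_inter, mem_union] at hx ⊢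
    tauto
  calc (l ∩ (C.m1 ∪ C.m2 ∪ C.m3)).card ≤ ((l ∩ C.m1) ∪ (l ∩ C.m2) ∪ (l ∩ C.m3)).card :=
        Finset.card_le_card hsu
    _ ≤ ((l ∩ C.m1) ∪ (l ∩ C.m2)).card + (l ∩ C.m3).card := Finset.card_union_le _ _
    _ ≤ ((l ∩ C.m1).card + (l ∩ C.m2).card) + (l ∩ C.m3).card := by
        have := Finset.card_union_le (l ∩ C.m1) (l ∩ C.m2); omega
    _ ≤ 3 := by
        have := C.int1 hl C.hm1 h1
        have := C.int1 hl C.hm2 h2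
        have := C.int1 hl C.hm3 h3
        omega

/-- In Case A (u, v disjoint far lines), any other far line w meets u and v in points
lying on two *distinct* pencil lines. -/
lemma Cfg.A1 {u v w : Finset α} (hu : u ∈ C.L) (hv : v ∈ C.L) (hw : w ∈ C.L)
    (hqu : C.q ∉ u) (hqv : C.q ∉ v) (hqw : C.q ∉ w)
    (hdisj : u ∩ v = ∅) (hwu : w ≠ u) (hwv : w ≠ v) :
    ∃ x y ma mb, x ∈ u ∧ x ∈ w ∧ y ∈ v ∧ y ∈ w ∧ x ∈ ma ∧ y ∈ mb ∧
      (ma = C.m1 ∨ ma = C.m2 ∨ ma = C.m3) ∧ (mb = C.m1 ∨ mb = C.m2 ∨ mb = C.m3) ∧ ma ≠ mb := by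
  have huv : u ≠ v := by
    rintro rfl
    rw [inter_self] at hdisj
    exact (C.nem hu).ne_empty hdisj
  have pack : ∀ ma mb : Finset α, (ma = C.m1 ∨ ma = C.m2 ∨ ma = C.m3) →
      (mb = C.m1 ∨ mb = C.m2 ∨ mb = C.m3) → ma ≠ mb →
      (∀ x, ((x ∈ u ∧ x ∈ w) ∨ (x ∈ v ∧ x ∈ w)) → x ∈ ma → False) →
      (∀ x, ((x ∈ u ∧ x ∈ w) ∨ (x ∈ v ∧ x ∈ w)) → x ∈ mb → False) → False := by
    intro ma mb hma hmb hnab hca hcb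
    obtain ⟨hmaL, hqma⟩ := C.mem_of_or hma
    obtain ⟨hmbL, hqmb⟩ := C.mem_of_or hmb
    have hab : ma ∩ mb = {C.q} := C.inter_eq hmaL hmbL hnab hqma hqmb
    refine C.no5 hu hv hw hmaL hmbL huv hwu.symm
      (by rintro rfl; exact hqu hqma) (by rintro rfl; exact hqu hqmb)
      hwv.symm (by rintro rfl; exact hqv hqma) (by rintro rfl; exact hqv hqmb)
      (by rintro rfl; exact hqw hqma) (by rintro rfl; exact hqw hqmb) hnab
      ?_ ?_ ?_ ?_ ?_ ?_ ?_ ?_ ?_ ?_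
    · intro x h1 h2 _
      have : x ∈ u ∩ v := mem_inter.2 ⟨h1, h2⟩
      rw [hdisj] at this; exact notMem_empty x this
    · intro x h1 h2 _
      have : x ∈ u ∩ v := mem_inter.2 ⟨h1, h2⟩
      rw [hdisj] at this; exact notMem_empty x this
    · intro x h1 h2 _
      have : x ∈ u ∩ v := mem_inter.2 ⟨h1, h2⟩
      rw [hdisj] at this; exact notMem_empty x this
    · exact fun x h1 h2 h3 => hca x (Or.inl ⟨h1, h2⟩) h3
    · exact fun x h1 h2 h3 => hcb x (Or.inl ⟨h1, h2⟩) h3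
    · intro x _ h2 h3
      have : x ∈ ma ∩ mb := mem_inter.2 ⟨h2, h3⟩
      rw [hab] at this
      exact absurd (mem_singleton.1 this ▸ ‹x ∈ u›) hqu
    · exact fun x h1 h2 h3 => hca x (Or.inr ⟨h1, h2⟩) h3
    · exact fun x h1 h2 h3 => hcb x (Or.inr ⟨h1, h2⟩) h3
    · intro x h1 h2 h3
      have : x ∈ ma ∩ mb := mem_inter.2 ⟨h2, h3⟩
      rw [hab] at this
      exact absurd (mem_singleton.1 this ▸ h1) hqv
    · intro x h1 h2 h3
      have : x ∈ ma ∩ mb := mem_inter.2 ⟨h2, h3⟩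
      rw [hab] at this
      exact absurd (mem_singleton.1 this ▸ h1) hqw
  have resolve : ∀ ma mb : Finset α, (ma = C.m1 ∨ ma = C.m2 ∨ ma = C.m3) →
      (mb = C.m1 ∨ mb = C.m2 ∨ mb = C.m3) → ma ≠ mb →
      (∃ x, ((x ∈ u ∧ x ∈ w) ∨ (x ∈ v ∧ x ∈ w)) ∧ x ∈ ma) →
      (∃ x, ((x ∈ u ∧ x ∈ w) ∨ (x ∈ v ∧ x ∈ w)) ∧ x ∈ mb) →
      ∃ x y ma' mb', x ∈ u ∧ x ∈ w ∧ y ∈ v ∧ y ∈ w ∧ x ∈ ma' ∧ y ∈ mb' ∧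
        (ma' = C.m1 ∨ ma' = C.m2 ∨ ma' = C.m3) ∧ (mb' = C.m1 ∨ mb' = C.m2 ∨ mb' = C.m3) ∧
        ma' ≠ mb' := by
    rintro ma mb hma hmb hnab ⟨x, hx, hxm⟩ ⟨y, hy, hym⟩
    obtain ⟨hmaL, hqma⟩ := C.mem_of_or hma
    obtain ⟨hmbL, hqmb⟩ := C.mem_of_or hmb
    have hab : ma ∩ mb = {C.q} := C.inter_eq hmaL hmbL hnab hqma hqmb
    rcases hx with ⟨hxu, hxw⟩ | ⟨hxv, hxw⟩ <;> rcases hy with ⟨hyu, hyw⟩ | ⟨hyv, hyw⟩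
    · -- both on u ∩ w : impossible
      exfalso
      have heq : u ∩ w = {x} := C.inter_eq hu hw hwu.symm hxu hxw
      have : y = x := by
        have : y ∈ u ∩ w := mem_inter.2 ⟨hyu, hyw⟩
        rw [heq] at this; exact mem_singleton.1 this
      subst this
      have : y ∈ ma ∩ mb := mem_inter.2 ⟨hxm, hym⟩
      rw [hab] at this
      exact hqu (mem_singleton.1 this ▸ hyu)
    · exact ⟨x, y, ma, mb, hxu, hxw, hyv, hyw, hxm, hym, hma, hmb, hnab⟩
    · exact ⟨y, x, mb, ma, hyu, hyw, hxv, hxw, hym, hxm, hmb, hma, hnab.symm⟩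
    · exfalso
      have heq : v ∩ w = {x} := C.inter_eq hv hw hwv.symm hxv hxw
      have : y = x := by
        have : y ∈ v ∩ w := mem_inter.2 ⟨hyv, hyw⟩
        rw [heq] at this; exact mem_singleton.1 this
      subst this
      have : y ∈ ma ∩ mb := mem_inter.2 ⟨hxm, hym⟩
      rw [hab] at this
      exact hqv (mem_singleton.1 this ▸ hyv)
  by_cases h1 : ∃ x, ((x ∈ u ∧ x ∈ w) ∨ (x ∈ v ∧ x ∈ w)) ∧ x ∈ C.m1 <;>
    by_cases h2 : ∃ x, ((x ∈ u ∧ x ∈ w) ∨ (x ∈ v ∧ x ∈ w)) ∧ x ∈ C.m2 <;>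
      by_cases h3 : ∃ x, ((x ∈ u ∧ x ∈ w) ∨ (x ∈ v ∧ x ∈ w)) ∧ x ∈ C.m3
  · exact resolve _ _ (Or.inl rfl) (Or.inr (Or.inl rfl)) C.hm12 h1 h2
  · exact resolve _ _ (Or.inl rfl) (Or.inr (Or.inl rfl)) C.hm12 h1 h2
  · exact resolve _ _ (Or.inl rfl) (Or.inr (Or.inr rfl)) C.hm13 h1 h3
  · exact absurd (pack _ _ (Or.inr (Or.inl rfl)) (Or.inr (Or.inr rfl)) C.hm23
      (fun x hx hm => h2 ⟨x, hx, hm⟩) (fun x hx hm => h3 ⟨x, hx, hm⟩)) (fun h => h)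
  · exact resolve _ _ (Or.inr (Or.inl rfl)) (Or.inr (Or.inr rfl)) C.hm23 h2 h3
  · exact absurd (pack _ _ (Or.inl rfl) (Or.inr (Or.inr rfl)) C.hm13
      (fun x hx hm => h1 ⟨x, hx, hm⟩) (fun x hx hm => h3 ⟨x, hx, hm⟩)) (fun h => h)
  · exact absurd (pack _ _ (Or.inl rfl) (Or.inr (Or.inl rfl)) C.hm12
      (fun x hx hm => h1 ⟨x, hx, hm⟩) (fun x hx hm => h2 ⟨x, hx, hm⟩)) (fun h => h)
  · exact absurd (pack _ _ (Or.inl rfl) (Or.inr (Or.inl rfl)) C.hm12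
      (fun x hx hm => h1 ⟨x, hx, hm⟩) (fun x hx hm => h2 ⟨x, hx, hm⟩)) (fun h => h)

set_option maxHeartbeats 1000000 in
/-- Case A: two disjoint far lines exist. -/
lemma Cfg.caseA {u v : Finset α} (hu : u ∈ C.L) (hv : v ∈ C.L)
    (hqu : C.q ∉ u) (hqv : C.q ∉ v) (hdisj : u ∩ v = ∅) :
    (C.r + 1) * tau C.P C.L ≤ C.P.card + C.L.card := by
  classical
  have huv : u ≠ v := by
    rintro rfl
    rw [inter_self] at hdisj
    exact (C.nem hu).ne_empty hdisj
  obtain ⟨su, hsu⟩ := C.nem hu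
  obtain ⟨sv, hsv⟩ := C.nem hv
  by_cases hw1e : ∃ w, w ∈ C.L ∧ C.q ∉ w ∧ w ≠ u ∧ w ≠ v
  swap
  · refine C.cover2 (C.hsub _ hu hsu) (C.hsub _ hv hsv) ?_
    intro l hl hql
    by_cases h : l = u
    · exact Or.inl (h ▸ hsu)
    by_cases h' : l = v
    · exact Or.inr (h' ▸ hsv)
    exact absurd ⟨l, hl, hql, h, h'⟩ hw1e
  obtain ⟨w1, hw1L, hqw1, hw1u, hw1v⟩ := hw1e
  obtain ⟨x1, y1, ma1, mb1, hx1u, hx1w, hy1v, hy1w, hx1m, hy1m, hma1, hmb1, hnab1⟩ :=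
    C.A1 hu hv hw1L hqu hqv hqw1 hdisj hw1u hw1v
  by_cases hw2e : ∃ w, (w ∈ C.L ∧ C.q ∉ w ∧ w ≠ u ∧ w ≠ v) ∧ w ≠ w1
  swap
  · refine C.cover2 (C.hsub _ hu hx1u) (C.hsub _ hv hsv) ?_
    intro l hl hql
    by_cases h : l = u
    · exact Or.inl (h ▸ hx1u)
    by_cases h' : l = v
    · exact Or.inr (h' ▸ hsv)
    by_cases h1 : l = w1
    · exact Or.inl (h1 ▸ hx1w)
    exact absurd ⟨l, ⟨hl, hql, h, h'⟩, h1⟩ hw2e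
  obtain ⟨w2, ⟨hw2L, hqw2, hw2u, hw2v⟩, hw21⟩ := hw2e
  obtain ⟨x2, y2, ma2, mb2, hx2u, hx2w, hy2v, hy2w, hx2m, hy2m, hma2, hmb2, hnab2⟩ :=
    C.A1 hu hv hw2L hqu hqv hqw2 hdisj hw2u hw2v
  by_cases hw3e : ∃ w, (w ∈ C.L ∧ C.q ∉ w ∧ w ≠ u ∧ w ≠ v) ∧ w ≠ w1 ∧ w ≠ w2
  swap
  · refine C.cover2 (C.hsub _ hu hx1u) (C.hsub _ hv hy2v) ?_
    intro l hl hql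
    by_cases h : l = u
    · exact Or.inl (h ▸ hx1u)
    by_cases h' : l = v
    · exact Or.inr (h' ▸ hy2v)
    by_cases h1 : l = w1
    · exact Or.inl (h1 ▸ hx1w)
    by_cases h2 : l = w2
    · exact Or.inr (h2 ▸ hy2w)
    exact absurd ⟨l, ⟨hl, hql, h, h'⟩, h1, h2⟩ hw3e
  obtain ⟨w3, ⟨hw3L, hqw3, hw3u, hw3v⟩, hw31, hw32⟩ := hw3e
  obtain ⟨x3, y3, ma3, mb3, hx3u, hx3w, hy3v, hy3w, hx3m, hy3m, hma3, hmb3, hnab3⟩ :=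
    C.A1 hu hv hw3L hqu hqv hqw3 hdisj hw3u hw3v
  -- a point of u ∩ w (on a pencil line) lies on no other W-line
  have keyu : ∀ w w' x mx, w ∈ C.L → w' ∈ C.L → w ≠ w' → C.q ∉ w → C.q ∉ w' →
      w ≠ u → w' ≠ u → (mx = C.m1 ∨ mx = C.m2 ∨ mx = C.m3) → x ∈ u → x ∈ w → x ∈ mx →
      x ∈ w' → False := by
    intro w w' x mx hwL hw'L hww' hqw hqw' hwu' hw'u hmx hxu hxw hxmx hxw'
    obtain ⟨hmxL, hqmx⟩ := C.mem_of_or hmx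
    exact C.degfour hu hwL hmxL hw'L hwu'.symm
      (by rintro rfl; exact hqu hqmx) hw'u.symm
      (by rintro rfl; exact hqw hqmx) hww'
      (by rintro rfl; exact hqw' hqmx)
      hxu hxw hxmx hxw'
  have keyv : ∀ w w' y my, w ∈ C.L → w' ∈ C.L → w ≠ w' → C.q ∉ w → C.q ∉ w' →
      w ≠ v → w' ≠ v → (my = C.m1 ∨ my = C.m2 ∨ my = C.m3) → y ∈ v → y ∈ w → y ∈ my →
      y ∈ w' → False := by
    intro w w' y my hwL hw'L hww' hqw hqw' hwv' hw'v hmy hyv hyw hymy hyw'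
    obtain ⟨hmyL, hqmy⟩ := C.mem_of_or hmy
    exact C.degfour hv hwL hmyL hw'L hwv'.symm
      (by rintro rfl; exact hqv hqmy) hw'v.symm
      (by rintro rfl; exact hqw hqmy) hww'
      (by rintro rfl; exact hqw' hqmy)
      hyv hyw hymy hyw'
  -- any three W-lines share a point
  have triple : ∀ wa wb wc : Finset α,
      (wa ∈ C.L ∧ C.q ∉ wa ∧ wa ≠ u ∧ wa ≠ v) →
      (wb ∈ C.L ∧ C.q ∉ wb ∧ wb ≠ u ∧ wb ≠ v) →
      (wc ∈ C.L ∧ C.q ∉ wc ∧ wc ≠ u ∧ wc ≠ v) →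
      wa ≠ wb → wa ≠ wc → wb ≠ wc →
      ∃ z, z ∈ wa ∧ z ∈ wb ∧ z ∈ wc := by
    rintro wa wb wc ⟨haL, hqa, hau, hav⟩ ⟨hbL, hqb, hbu, hbv⟩ ⟨hcL, hqc, hcu, hcv⟩ hab hac hbc
    by_contra hno
    push_neg at hno
    obtain ⟨xa, ya, maa, mba, hxau, hxaw, hyav, hyaw, hxam, hyam, hmaa, hmba, hnaba⟩ :=
      C.A1 hu hv haL hqu hqv hqa hdisj hau hav
    obtain ⟨xb, yb, mab, mbb, hxbu, hxbw, hybv, hybw, hxbm, hybm, hmab, hmbb, hnabb⟩ :=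
      C.A1 hu hv hbL hqu hqv hqb hdisj hbu hbv
    have hdsj : ∀ x, x ∈ u → x ∈ v → False := by
      intro x h1 h2
      have : x ∈ u ∩ v := mem_inter.2 ⟨h1, h2⟩
      rw [hdisj] at this; exact notMem_empty x this
    refine C.no5 hu hv haL hbL hcL huv hau.symm hbu.symm hcu.symm hav.symm hbv.symm hcv.symm
      hab hac hbc
      (fun x h1 h2 _ => hdsj x h1 h2) (fun x h1 h2 _ => hdsj x h1 h2)
      (fun x h1 h2 _ => hdsj x h1 h2) ?_ ?_ ?_ ?_ ?_ ?_
      (fun x h1 h2 h3 => hno x h1 h2 h3)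
    · -- u, wa, wb
      intro x h1 h2 h3
      have : u ∩ wa = {xa} := C.inter_eq hu haL (fun h => hau h.symm) hxau hxaw
      have hx : x = xa := by
        have : x ∈ u ∩ wa := mem_inter.2 ⟨h1, h2⟩
        rw [‹u ∩ wa = {xa}›] at this; exact mem_singleton.1 this
      subst hx
      exact keyu wa wb x maa haL hbL hab hqa hqb hau hbu hmaa h1 h2 hxam h3
    · -- u, wa, wc
      intro x h1 h2 h3
      have : u ∩ wa = {xa} := C.inter_eq hu haL (fun h => hau h.symm) hxau hxaw
      have hx : x = xa := by
        have : x ∈ u ∩ wa := mem_inter.2 ⟨h1, h2⟩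
        rw [‹u ∩ wa = {xa}›] at this; exact mem_singleton.1 this
      subst hx
      exact keyu wa wc x maa haL hcL hac hqa hqc hau hcu hmaa h1 h2 hxam h3
    · -- u, wb, wc
      intro x h1 h2 h3
      have : u ∩ wb = {xb} := C.inter_eq hu hbL (fun h => hbu h.symm) hxbu hxbw
      have hx : x = xb := by
        have : x ∈ u ∩ wb := mem_inter.2 ⟨h1, h2⟩
        rw [‹u ∩ wb = {xb}›] at this; exact mem_singleton.1 this
      subst hx
      exact keyu wb wc x mab hbL hcL hbc hqb hqc hbu hcu hmab h1 h2 hxbm h3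
    · -- v, wa, wb
      intro y h1 h2 h3
      have : v ∩ wa = {ya} := C.inter_eq hv haL (fun h => hav h.symm) hyav hyaw
      have hy : y = ya := by
        have : y ∈ v ∩ wa := mem_inter.2 ⟨h1, h2⟩
        rw [‹v ∩ wa = {ya}›] at this; exact mem_singleton.1 this
      subst hy
      exact keyv wa wb y mba haL hbL hab hqa hqb hav hbv hmba h1 h2 hyam h3
    · -- v, wa, wc
      intro y h1 h2 h3
      have : v ∩ wa = {ya} := C.inter_eq hv haL (fun h => hav h.symm) hyav hyaw
      have hy : y = ya := by
        have : y ∈ v ∩ wa := mem_inter.2 ⟨h1, h2⟩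
        rw [‹v ∩ wa = {ya}›] at this; exact mem_singleton.1 this
      subst hy
      exact keyv wa wc y mba haL hcL hac hqa hqc hav hcv hmba h1 h2 hyam h3
    · -- v, wb, wc
      intro y h1 h2 h3
      have : v ∩ wb = {yb} := C.inter_eq hv hbL (fun h => hbv h.symm) hybv hybw
      have hy : y = yb := by
        have : y ∈ v ∩ wb := mem_inter.2 ⟨h1, h2⟩
        rw [‹v ∩ wb = {yb}›] at this; exact mem_singleton.1 this
      subst hy
      exact keyv wb wc y mbb hbL hcL hbc hqb hqc hbv hcv hmbb h1 h2 hybm h3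
  obtain ⟨z, hzw1, hzw2, hzw3⟩ := triple w1 w2 w3 ⟨hw1L, hqw1, hw1u, hw1v⟩
    ⟨hw2L, hqw2, hw2u, hw2v⟩ ⟨hw3L, hqw3, hw3u, hw3v⟩ hw21.symm hw31.symm hw32.symm
  have hw12 : w1 ∩ w2 = {z} := C.inter_eq hw1L hw2L hw21.symm hzw1 hzw2
  -- z avoids pencil lines and u, v
  have hzm : ∀ mx, (mx = C.m1 ∨ mx = C.m2 ∨ mx = C.m3) → z ∉ mx := by
    intro mx hmx hzmx
    obtain ⟨hmxL, hqmx⟩ := C.mem_of_or hmx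
    exact C.degfour hw1L hw2L hw3L hmxL hw21.symm hw31.symm
      (by rintro rfl; exact hqw1 hqmx) hw32.symm
      (by rintro rfl; exact hqw2 hqmx) (by rintro rfl; exact hqw3 hqmx)
      hzw1 hzw2 hzw3 hzmx
  have hzu : z ∉ u := by
    intro hzu
    exact C.degfour hu hw1L hw2L hw3L hw1u.symm hw2u.symm hw3u.symm hw21.symm hw31.symm
      hw32.symm hzu hzw1 hzw2 hzw3
  have hzv : z ∉ v := by
    intro hzv
    exact C.degfour hv hw1L hw2L hw3L hw1v.symm hw2v.symm hw3v.symm hw21.symm hw31.symm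
      hw32.symm hzv hzw1 hzw2 hzw3
  -- there are no other far lines
  have Wex : ∀ l, l ∈ C.L → C.q ∉ l → l ≠ u → l ≠ v → l = w1 ∨ l = w2 ∨ l = w3 := by
    intro l hl hql hlu hlv
    by_contra hc
    push_neg at hc
    obtain ⟨h1, h2, h3⟩ := hc
    obtain ⟨z', hz1, hz2, hzl⟩ := triple w1 w2 l ⟨hw1L, hqw1, hw1u, hw1v⟩
      ⟨hw2L, hqw2, hw2u, hw2v⟩ ⟨hl, hql, hlu, hlv⟩ hw21.symm (fun h => h1 h.symm)
      (fun h => h2 h.symm)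
    have : z' = z := by
      have : z' ∈ w1 ∩ w2 := mem_inter.2 ⟨hz1, hz2⟩
      rw [hw12] at this; exact mem_singleton.1 this
    subst this
    exact C.degfour hw1L hw2L hw3L hl hw21.symm hw31.symm (fun h => h1 h.symm) hw32.symm
      (fun h => h2 h.symm) (fun h => h3 h.symm) hz1 hz2 hzw3 hzl
  -- transversal of size 4
  have h4 : tau C.P C.L ≤ 4 := by
    refine C.tau_le4 (C.hsub _ hu hx1u) (C.hsub _ hv hy1v) (C.hsub _ hw1L hzw1) ?_
    intro l hl hql
    by_cases h : l = u
    · exact Or.inl (h ▸ hx1u)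
    by_cases h' : l = v
    · exact Or.inr (Or.inl (h' ▸ hy1v))
    rcases Wex l hl hql h h' with rfl | rfl | rfl
    exacts [Or.inr (Or.inr hzw1), Or.inr (Or.inr hzw2), Or.inr (Or.inr hzw3)]
  -- r ≥ 3
  have hxx : ∀ wa wb xa xb, wa ≠ wb → z ∈ wa → z ∈ wb → wa ∈ C.L → wb ∈ C.L →
      xa ∈ u → xa ∈ wa → xb ∈ u → xb ∈ wb → xa ≠ xb := by
    intro wa wb xa xb hab hza hzb haL hbL hxau hxaa hxbu hxbb heq
    subst heq
    have : wa ∩ wb = {z} := C.inter_eq haL hbL hab hza hzb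
    have : xa = z := by
      have : xa ∈ wa ∩ wb := mem_inter.2 ⟨hxaa, hxbb⟩
      rw [‹wa ∩ wb = {z}›] at this; exact mem_singleton.1 this
    exact hzu (this ▸ hxau)
  have hx12 : x1 ≠ x2 := hxx w1 w2 x1 x2 hw21.symm hzw1 hzw2 hw1L hw2L hx1u hx1w hx2u hx2w
  have hx13 : x1 ≠ x3 := hxx w1 w3 x1 x3 hw31.symm hzw1 hzw3 hw1L hw3L hx1u hx1w hx3u hx3w
  have hx23 : x2 ≠ x3 := hxx w2 w3 x2 x3 hw32.symm hzw2 hzw3 hw2L hw3L hx2u hx2w hx3u hx3w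
  have hr3 : 3 ≤ C.r := by
    have hsub3 : ({x1, x2, x3} : Finset α) ⊆ u := by
      intro x hx
      simp only [mem_insert, mem_singleton] at hx
      rcases hx with rfl | rfl | rfl <;> assumption
    have hc := Finset.card_le_card hsub3
    rw [card_insert_of_notMem (by simp [hx12, hx13]),
      card_insert_of_notMem (by simp [hx23]), card_singleton, C.hunif _ hu] at hc
    exact hc
  -- |L| ≥ 8
  have nm1u : C.m1 ≠ u := by rintro rfl; exact hqu C.hqm1
  have nm2u : C.m2 ≠ u := by rintro rfl; exact hqu C.hqm2
  have nm3u : C.m3 ≠ u := by rintro rfl; exact hqu C.hqm3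
  have nm1v : C.m1 ≠ v := by rintro rfl; exact hqv C.hqm1
  have nm2v : C.m2 ≠ v := by rintro rfl; exact hqv C.hqm2
  have nm3v : C.m3 ≠ v := by rintro rfl; exact hqv C.hqm3
  have nm1w1 : C.m1 ≠ w1 := by rintro rfl; exact hqw1 C.hqm1
  have nm2w1 : C.m2 ≠ w1 := by rintro rfl; exact hqw1 C.hqm2
  have nm3w1 : C.m3 ≠ w1 := by rintro rfl; exact hqw1 C.hqm3
  have nm1w2 : C.m1 ≠ w2 := by rintro rfl; exact hqw2 C.hqm1
  have nm2w2 : C.m2 ≠ w2 := by rintro rfl; exact hqw2 C.hqm2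
  have nm3w2 : C.m3 ≠ w2 := by rintro rfl; exact hqw2 C.hqm3
  have nm1w3 : C.m1 ≠ w3 := by rintro rfl; exact hqw3 C.hqm1
  have nm2w3 : C.m2 ≠ w3 := by rintro rfl; exact hqw3 C.hqm2
  have nm3w3 : C.m3 ≠ w3 := by rintro rfl; exact hqw3 C.hqm3
  have hq8 : 8 ≤ C.L.card := by
    have hsub8 : ({C.m1, C.m2, C.m3, u, v, w1, w2, w3} : Finset (Finset α)) ⊆ C.L := by
      intro l hl
      simp only [mem_insert, mem_singleton] at hl
      rcases hl with rfl | rfl | rfl | rfl | rfl | rfl | rfl | rfl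
      exacts [C.hm1, C.hm2, C.hm3, hu, hv, hw1L, hw2L, hw3L]
    have hc8 : ({C.m1, C.m2, C.m3, u, v, w1, w2, w3} : Finset (Finset α)).card = 8 := by
      rw [card_insert_of_notMem (by
            simp only [mem_insert, mem_singleton]; push_neg
            exact ⟨C.hm12, C.hm13, nm1u, nm1v, nm1w1, nm1w2, nm1w3⟩),
        card_insert_of_notMem (by
            simp only [mem_insert, mem_singleton]; push_neg
            exact ⟨C.hm23, nm2u, nm2v, nm2w1, nm2w2, nm2w3⟩),
        card_insert_of_notMem (by
            simp only [mem_insert, mem_singleton]; push_neg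
            exact ⟨nm3u, nm3v, nm3w1, nm3w2, nm3w3⟩),
        card_insert_of_notMem (by
            simp only [mem_insert, mem_singleton]; push_neg
            exact ⟨huv, fun h => hw1u h.symm, fun h => hw2u h.symm, fun h => hw3u h.symm⟩),
        card_insert_of_notMem (by
            simp only [mem_insert, mem_singleton]; push_neg
            exact ⟨fun h => hw1v h.symm, fun h => hw2v h.symm, fun h => hw3v h.symm⟩),
        card_insert_of_notMem (by
            simp only [mem_insert, mem_singleton]; push_neg
            exact ⟨hw21.symm, hw31.symm⟩),
        card_insert_of_notMem (by simp [hw32.symm]), card_singleton]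
    have := Finset.card_le_card hsub8
    omega
  -- |P| ≥ 5r - 7
  have hp : 5 * C.r ≤ C.P.card + 7 := by
    have hm := C.mcard
    have e1 := Finset.card_union_add_card_inter (C.m1 ∪ C.m2 ∪ C.m3) u
    have i1 : ((C.m1 ∪ C.m2 ∪ C.m3) ∩ u).card ≤ 3 := by
      rw [inter_comm]; exact C.inter3 hu hqu
    have e2 := Finset.card_union_add_card_inter ((C.m1 ∪ C.m2 ∪ C.m3) ∪ u) v
    have i2 : (((C.m1 ∪ C.m2 ∪ C.m3) ∪ u) ∩ v).card ≤ 3 := by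
      have hss : ((C.m1 ∪ C.m2 ∪ C.m3) ∪ u) ∩ v ⊆ v ∩ (C.m1 ∪ C.m2 ∪ C.m3) := by
        intro x hx
        simp only [mem_inter, mem_union] at hx ⊢
        rcases hx with ⟨hm | hu', hv'⟩
        · exact ⟨hv', hm⟩
        · exfalso
          have : x ∈ u ∩ v := mem_inter.2 ⟨hu', hv'⟩
          rw [hdisj] at this; exact notMem_empty x this
      calc (((C.m1 ∪ C.m2 ∪ C.m3) ∪ u) ∩ v).card ≤ _ := Finset.card_le_card hss
        _ ≤ 3 := C.inter3 hv hqv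
    have hznot : z ∉ (C.m1 ∪ C.m2 ∪ C.m3) ∪ u ∪ v := by
      intro h
      simp only [mem_union] at h
      rcases h with (((h | h) | h) | h) | h
      exacts [hzm _ (Or.inl rfl) h, hzm _ (Or.inr (Or.inl rfl)) h,
        hzm _ (Or.inr (Or.inr rfl)) h, hzu h, hzv h]
    have e3 : (insert z ((C.m1 ∪ C.m2 ∪ C.m3) ∪ u ∪ v)).card
        = ((C.m1 ∪ C.m2 ∪ C.m3) ∪ u ∪ v).card + 1 :=
      card_insert_of_notMem hznot
    have hsubP : insert z ((C.m1 ∪ C.m2 ∪ C.m3) ∪ u ∪ v) ⊆ C.P := by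
      intro x hx
      simp only [mem_insert, mem_union] at hx
      rcases hx with rfl | (((hm | hm) | hm) | hm) | hm
      exacts [C.hsub _ hw1L hzw1, C.hsub _ C.hm1 hm, C.hsub _ C.hm2 hm, C.hsub _ C.hm3 hm,
        C.hsub _ hu hm, C.hsub _ hv hm]
    have hPc := Finset.card_le_card hsubP
    have huu := C.hunif _ hu
    have hvv := C.hunif _ hv
    omega
  have h1 : (C.r + 1) * tau C.P C.L ≤ (C.r + 1) * 4 := Nat.mul_le_mul_left _ h4
  omega
lemma Cfg.two_pt {g h : Finset α} {x y : α} (hg : g ∈ C.L) (hh : h ∈ C.L)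
    (hx : x ∈ g) (hx' : x ∈ h) (hy : y ∈ g) (hy' : y ∈ h) (hxy : x ≠ y) : g = h := by
  by_contra hne
  have h1 := C.int1 hg hh hne
  have hsub : ({x, y} : Finset α) ⊆ g ∩ h := by
    intro t ht
    simp only [mem_insert, mem_singleton] at ht
    rcases ht with rfl | rfl <;> exact mem_inter.2 ⟨by assumption, by assumption⟩
  have := Finset.card_le_card hsub
  rw [card_insert_of_notMem (by simp [hxy]), card_singleton] at this
  omega

/-- nine distinct lines in L : the three pencil lines plus six far lines -/
lemma Cfg.Lge9 {A B D E F G : Finset α}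
    (hA : A ∈ C.L) (hB : B ∈ C.L) (hD : D ∈ C.L) (hE : E ∈ C.L) (hF : F ∈ C.L) (hG : G ∈ C.L)
    (qA : C.q ∉ A) (qB : C.q ∉ B) (qD : C.q ∉ D) (qE : C.q ∉ E) (qF : C.q ∉ F) (qG : C.q ∉ G)
    (nAB : A ≠ B) (nAD : A ≠ D) (nAE : A ≠ E) (nAF : A ≠ F) (nAG : A ≠ G)
    (nBD : B ≠ D) (nBE : B ≠ E) (nBF : B ≠ F) (nBG : B ≠ G)
    (nDE : D ≠ E) (nDF : D ≠ F) (nDG : D ≠ G) (nEF : E ≠ F) (nEG : E ≠ G) (nFG : F ≠ G) :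
    9 ≤ C.L.card := by
  have hsub9 : ({C.m1, C.m2, C.m3, A, B, D, E, F, G} : Finset (Finset α)) ⊆ C.L := by
    intro l hl
    simp only [mem_insert, mem_singleton] at hl
    rcases hl with rfl | rfl | rfl | rfl | rfl | rfl | rfl | rfl | rfl
    exacts [C.hm1, C.hm2, C.hm3, hA, hB, hD, hE, hF, hG]
  have nm : ∀ m l : Finset α, C.q ∈ m → C.q ∉ l → m ≠ l := by
    rintro m l hm hls rfl; exact hls hm
  have hc9 : ({C.m1, C.m2, C.m3, A, B, D, E, F, G} : Finset (Finset α)).card = 9 := by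
    rw [card_insert_of_notMem (by
          simp only [mem_insert, mem_singleton]; push_neg
          exact ⟨C.hm12, C.hm13, nm _ _ C.hqm1 qA, nm _ _ C.hqm1 qB, nm _ _ C.hqm1 qD,
            nm _ _ C.hqm1 qE, nm _ _ C.hqm1 qF, nm _ _ C.hqm1 qG⟩),
      card_insert_of_notMem (by
          simp only [mem_insert, mem_singleton]; push_neg
          exact ⟨C.hm23, nm _ _ C.hqm2 qA, nm _ _ C.hqm2 qB, nm _ _ C.hqm2 qD,
            nm _ _ C.hqm2 qE, nm _ _ C.hqm2 qF, nm _ _ C.hqm2 qG⟩),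
      card_insert_of_notMem (by
          simp only [mem_insert, mem_singleton]; push_neg
          exact ⟨nm _ _ C.hqm3 qA, nm _ _ C.hqm3 qB, nm _ _ C.hqm3 qD,
            nm _ _ C.hqm3 qE, nm _ _ C.hqm3 qF, nm _ _ C.hqm3 qG⟩),
      card_insert_of_notMem (by
          simp only [mem_insert, mem_singleton]; push_neg
          exact ⟨nAB, nAD, nAE, nAF, nAG⟩),
      card_insert_of_notMem (by
          simp only [mem_insert, mem_singleton]; push_neg
          exact ⟨nBD, nBE, nBF, nBG⟩),
      card_insert_of_notMem (by
          simp only [mem_insert, mem_singleton]; push_neg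
          exact ⟨nDE, nDF, nDG⟩),
      card_insert_of_notMem (by
          simp only [mem_insert, mem_singleton]; push_neg
          exact ⟨nEF, nEG⟩),
      card_insert_of_notMem (by simp [nFG]), card_singleton]
  have := Finset.card_le_card hsub9
  omega

/-- |P| ≥ 6r - 14 given a triangle of far lines -/
lemma Cfg.pcount6 {l1 l2 l3 : Finset α}
    (hl1 : l1 ∈ C.L) (hl2 : l2 ∈ C.L) (hl3 : l3 ∈ C.L)
    (hq1 : C.q ∉ l1) (hq2 : C.q ∉ l2) (hq3 : C.q ∉ l3)
    (h12 : l1 ≠ l2) (h13 : l1 ≠ l3) (h23 : l2 ≠ l3) :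
    6 * C.r ≤ C.P.card + 14 := by
  have hm := C.mcard
  set Mu := C.m1 ∪ C.m2 ∪ C.m3 with hMu
  have e1 := Finset.card_union_add_card_inter Mu l1
  have i1 : (Mu ∩ l1).card ≤ 3 := by rw [inter_comm]; exact C.inter3 hl1 hq1
  have e2 := Finset.card_union_add_card_inter (Mu ∪ l1) l2
  have i2 : ((Mu ∪ l1) ∩ l2).card ≤ 4 := by
    have hss : (Mu ∪ l1) ∩ l2 ⊆ (l2 ∩ Mu) ∪ (l2 ∩ l1) := by
      intro x hx
      simp only [mem_inter, mem_union] at hx ⊢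
      tauto
    calc ((Mu ∪ l1) ∩ l2).card ≤ _ := Finset.card_le_card hss
      _ ≤ (l2 ∩ Mu).card + (l2 ∩ l1).card := Finset.card_union_le _ _
      _ ≤ 4 := by
          have h5 := C.inter3 hl2 hq2
          rw [← hMu] at h5
          have := C.int1 hl2 hl1 h12.symm
          omega
  have e3 := Finset.card_union_add_card_inter (Mu ∪ l1 ∪ l2) l3
  have i3 : ((Mu ∪ l1 ∪ l2) ∩ l3).card ≤ 5 := by
    have hss : (Mu ∪ l1 ∪ l2) ∩ l3 ⊆ (l3 ∩ Mu) ∪ (l3 ∩ l1) ∪ (l3 ∩ l2) := by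
      intro x hx
      simp only [mem_inter, mem_union] at hx ⊢
      tauto
    calc ((Mu ∪ l1 ∪ l2) ∩ l3).card ≤ _ := Finset.card_le_card hss
      _ ≤ ((l3 ∩ Mu) ∪ (l3 ∩ l1)).card + (l3 ∩ l2).card := Finset.card_union_le _ _
      _ ≤ 5 := by
          have h4 := Finset.card_union_le (l3 ∩ Mu) (l3 ∩ l1)
          have h5 := C.inter3 hl3 hq3
          rw [← hMu] at h5
          have := C.int1 hl3 hl1 h13.symm
          have := C.int1 hl3 hl2 h23.symm
          omega
  have hsubP : Mu ∪ l1 ∪ l2 ∪ l3 ⊆ C.P := by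
    intro x hx
    simp only [hMu, mem_union] at hx
    rcases hx with ((((hx | hx) | hx) | hx) | hx) | hx
    exacts [C.hsub _ C.hm1 hx, C.hsub _ C.hm2 hx, C.hsub _ C.hm3 hx,
      C.hsub _ hl1 hx, C.hsub _ hl2 hx, C.hsub _ hl3 hx]
  have hPc := Finset.card_le_card hsubP
  have hu1 := C.hunif _ hl1
  have hu2 := C.hunif _ hl2
  have hu3 := C.hunif _ hl3
  omega

set_option maxHeartbeats 2000000 in
/-- Case B: all far lines pairwise intersect, and no common point. -/
lemma Cfg.caseB
    (hmeet : ∀ u v : Finset α, u ∈ C.L → C.q ∉ u → v ∈ C.L → C.q ∉ v → u ≠ v →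
      (u ∩ v).Nonempty)
    (hnocp : ¬∃ x, x ∈ C.P ∧ ∀ l ∈ C.L, C.q ∉ l → x ∈ l) :
    (C.r + 1) * tau C.P C.L ≤ C.P.card + C.L.card := by
  classical
  -- a first far line
  obtain ⟨l1, hl1, hq1⟩ : ∃ l, l ∈ C.L ∧ C.q ∉ l := by
    by_contra h
    push_neg at h
    exact hnocp ⟨C.q, C.hqP, fun l hl hql => (hql (h l hl)).elim⟩
  -- a second far line
  obtain ⟨l2, ⟨hl2, hq2⟩, hne21⟩ : ∃ l, (l ∈ C.L ∧ C.q ∉ l) ∧ l ≠ l1 := by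
    by_contra h
    push_neg at h
    obtain ⟨s, hs⟩ := C.nem hl1
    refine hnocp ⟨s, C.hsub _ hl1 hs, fun l hl hql => ?_⟩
    rw [h l ⟨hl, hql⟩]
    exact hs
  have hne12 : l1 ≠ l2 := hne21.symm
  obtain ⟨a, haa⟩ := hmeet l1 l2 hl1 hq1 hl2 hq2 hne12
  obtain ⟨ha1, ha2⟩ := mem_inter.1 haa
  -- a third far line missing a
  obtain ⟨l3, ⟨hl3, hq3⟩, hal3⟩ : ∃ l, (l ∈ C.L ∧ C.q ∉ l) ∧ a ∉ l := by
    by_contra h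
    push_neg at h
    exact hnocp ⟨a, C.hsub _ hl1 ha1, fun l hl hql => h l ⟨hl, hql⟩⟩
  have hne13 : l1 ≠ l3 := by rintro rfl; exact hal3 ha1
  have hne23 : l2 ≠ l3 := by rintro rfl; exact hal3 ha2
  obtain ⟨b, hbb⟩ := hmeet l1 l3 hl1 hq1 hl3 hq3 hne13
  obtain ⟨hb1, hb3⟩ := mem_inter.1 hbb
  obtain ⟨c, hcc⟩ := hmeet l2 l3 hl2 hq2 hl3 hq3 hne23
  obtain ⟨hc2, hc3⟩ := mem_inter.1 hcc
  have hl12 : l1 ∩ l2 = {a} := C.inter_eq hl1 hl2 hne12 ha1 ha2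
  have hl13 : l1 ∩ l3 = {b} := C.inter_eq hl1 hl3 hne13 hb1 hb3
  have hl23 : l2 ∩ l3 = {c} := C.inter_eq hl2 hl3 hne23 hc2 hc3
  have hab : a ≠ b := by rintro rfl; exact hal3 hb3
  have hac : a ≠ c := by rintro rfl; exact hal3 hc3
  have hbc : b ≠ c := by
    rintro rfl
    have : b ∈ l1 ∩ l2 := mem_inter.2 ⟨hb1, hc2⟩
    rw [hl12] at this
    exact hab (mem_singleton.1 this).symm
  have hbl2 : b ∉ l2 := by
    intro h
    have : b ∈ l1 ∩ l2 := mem_inter.2 ⟨hb1, h⟩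
    rw [hl12] at this
    exact hab (mem_singleton.1 this).symm
  have hcl1 : c ∉ l1 := by
    intro h
    have : c ∈ l1 ∩ l2 := mem_inter.2 ⟨h, hc2⟩
    rw [hl12] at this
    exact hac (mem_singleton.1 this).symm
  -- the meeting point of two avoiders lies on a triangle line
  have host : ∀ e f : Finset α, e ∈ C.L → C.q ∉ e → a ∉ e → b ∉ e → c ∉ e →
      f ∈ C.L → C.q ∉ f → a ∉ f → b ∉ f → c ∉ f → e ≠ f →
      ∃ w, w ∈ e ∧ w ∈ f ∧ (w ∈ l1 ∨ w ∈ l2 ∨ w ∈ l3) := by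
    intro e f heL hqe hae hbe hce hfL hqf haf hbf hcf hef
    obtain ⟨w, hw⟩ := hmeet e f heL hqe hfL hqf hef
    obtain ⟨hwe, hwf⟩ := mem_inter.1 hw
    refine ⟨w, hwe, hwf, ?_⟩
    by_contra hn
    push_neg at hn
    obtain ⟨hn1, hn2, hn3⟩ := hn
    have hewf : e ∩ f = {w} := C.inter_eq heL hfL hef hwe hwf
    have wonly : ∀ x, x ∈ e → x ∈ f → x = w := by
      intro x h1 h2
      have : x ∈ e ∩ f := mem_inter.2 ⟨h1, h2⟩
      rw [hewf] at this
      exact mem_singleton.1 this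
    refine C.no5 heL hfL hl1 hl2 hl3 hef
      (by rintro rfl; exact hae ha1) (by rintro rfl; exact hae ha2)
      (by rintro rfl; exact hbe hb3)
      (by rintro rfl; exact haf ha1) (by rintro rfl; exact haf ha2)
      (by rintro rfl; exact hbf hb3) hne12 hne13 hne23 ?_ ?_ ?_ ?_ ?_ ?_ ?_ ?_ ?_ ?_
    · exact fun x h1 h2 h3 => hn1 (wonly x h1 h2 ▸ h3)
    · exact fun x h1 h2 h3 => hn2 (wonly x h1 h2 ▸ h3)
    · exact fun x h1 h2 h3 => hn3 (wonly x h1 h2 ▸ h3)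
    · intro x h1 h2 h3
      have : x ∈ l1 ∩ l2 := mem_inter.2 ⟨h2, h3⟩
      rw [hl12] at this
      exact hae (mem_singleton.1 this ▸ h1)
    · intro x h1 h2 h3
      have : x ∈ l1 ∩ l3 := mem_inter.2 ⟨h2, h3⟩
      rw [hl13] at this
      exact hbe (mem_singleton.1 this ▸ h1)
    · intro x h1 h2 h3
      have : x ∈ l2 ∩ l3 := mem_inter.2 ⟨h2, h3⟩
      rw [hl23] at this
      exact hce (mem_singleton.1 this ▸ h1)
    · intro x h1 h2 h3
      have : x ∈ l1 ∩ l2 := mem_inter.2 ⟨h2, h3⟩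
      rw [hl12] at this
      exact haf (mem_singleton.1 this ▸ h1)
    · intro x h1 h2 h3
      have : x ∈ l1 ∩ l3 := mem_inter.2 ⟨h2, h3⟩
      rw [hl13] at this
      exact hbf (mem_singleton.1 this ▸ h1)
    · intro x h1 h2 h3
      have : x ∈ l2 ∩ l3 := mem_inter.2 ⟨h2, h3⟩
      rw [hl23] at this
      exact hcf (mem_singleton.1 this ▸ h1)
    · intro x h1 h2 h3
      have : x ∈ l1 ∩ l2 := mem_inter.2 ⟨h1, h2⟩
      rw [hl12] at this
      exact hal3 (mem_singleton.1 this ▸ h3)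
  have hp14 : 6 * C.r ≤ C.P.card + 14 :=
    C.pcount6 hl1 hl2 hl3 hq1 hq2 hq3 hne12 hne13 hne23
  -- the segment between two "avoiders" supports no third line besides its host
  have avkey : ∀ p1 p2 X : Finset α,
      p1 ∈ C.L → C.q ∉ p1 → a ∉ p1 → b ∉ p1 → c ∉ p1 →
      p2 ∈ C.L → C.q ∉ p2 → a ∉ p2 → b ∉ p2 → c ∉ p2 → p1 ≠ p2 →
      X ∈ C.L → X ≠ p1 → X ≠ p2 → X ≠ l1 → X ≠ l2 → X ≠ l3 →
      ∀ x, x ∈ p1 → x ∈ p2 → x ∈ X → False := by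
    intro p1 p2 X h1L hq1' ha1' hb1' hc1' h2L hq2' ha2' hb2' hc2' h12
      hXL hX1 hX2 hXl1 hXl2 hXl3 x hx1 hx2 hxX
    obtain ⟨w', hw'1, hw'2, hor⟩ := host p1 p2 h1L hq1' ha1' hb1' hc1'
      h2L hq2' ha2' hb2' hc2' h12
    have hxw : x = w' := by
      have : x ∈ p1 ∩ p2 := mem_inter.2 ⟨hx1, hx2⟩
      rw [C.inter_eq h1L h2L h12 hw'1 hw'2] at this
      exact mem_singleton.1 this
    subst hxw
    have n1l1 : p1 ≠ l1 := by rintro rfl; exact ha1' ha1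
    have n1l2 : p1 ≠ l2 := by rintro rfl; exact ha1' ha2
    have n1l3 : p1 ≠ l3 := by rintro rfl; exact hb1' hb3
    have n2l1 : p2 ≠ l1 := by rintro rfl; exact ha2' ha1
    have n2l2 : p2 ≠ l2 := by rintro rfl; exact ha2' ha2
    have n2l3 : p2 ≠ l3 := by rintro rfl; exact hb2' hb3
    rcases hor with h | h | h
    · exact C.degfour h1L h2L hl1 hXL h12 n1l1 hX1.symm n2l1 hX2.symm
        (fun hh => hXl1 hh.symm) hw'1 hw'2 h hxX
    · exact C.degfour h1L h2L hl2 hXL h12 n1l2 hX1.symm n2l2 hX2.symm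
        (fun hh => hXl2 hh.symm) hw'1 hw'2 h hxX
    · exact C.degfour h1L h2L hl3 hXL h12 n1l3 hX1.symm n2l3 hX2.symm
        (fun hh => hXl3 hh.symm) hw'1 hw'2 h hxX
  -- triangle line inequalities with extras will be needed repeatedly
  by_cases hav1 : ∃ e, e ∈ C.L ∧ C.q ∉ e ∧ a ∉ e ∧ b ∉ e ∧ c ∉ e
  swap
  · -- no avoiders
    by_cases hEc : ∃ g, g ∈ C.L ∧ C.q ∉ g ∧ g ≠ l2 ∧ g ≠ l3 ∧ c ∈ g
    swap
    · refine C.cover2 (C.hsub _ hl1 ha1) (C.hsub _ hl1 hb1) ?_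
      intro l hl hql
      by_cases hal : a ∈ l
      · exact Or.inl hal
      by_cases hbl : b ∈ l
      · exact Or.inr hbl
      exfalso
      by_cases hcl : c ∈ l
      · exact hEc ⟨l, hl, hql, (by rintro rfl; exact hal ha2),
          (by rintro rfl; exact hbl hb3), hcl⟩
      · exact hav1 ⟨l, hl, hql, hal, hbl, hcl⟩
    obtain ⟨ec, hecL, hqec, hec2, hec3, hcec⟩ := hEc
    by_cases hEa : ∃ g, g ∈ C.L ∧ C.q ∉ g ∧ g ≠ l1 ∧ g ≠ l2 ∧ a ∈ g
    swap
    · refine C.cover2 (C.hsub _ hl1 hb1) (C.hsub _ hl2 hc2) ?_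
      intro l hl hql
      by_cases hbl : b ∈ l
      · exact Or.inl hbl
      by_cases hcl : c ∈ l
      · exact Or.inr hcl
      exfalso
      by_cases hal : a ∈ l
      · exact hEa ⟨l, hl, hql, (by rintro rfl; exact hbl hb1),
          (by rintro rfl; exact hcl hc2), hal⟩
      · exact hav1 ⟨l, hl, hql, hal, hbl, hcl⟩
    obtain ⟨ea, heaL, hqea, hea1, hea2, haea⟩ := hEa
    by_cases hEb : ∃ g, g ∈ C.L ∧ C.q ∉ g ∧ g ≠ l1 ∧ g ≠ l3 ∧ b ∈ g
    swap
    · refine C.cover2 (C.hsub _ hl1 ha1) (C.hsub _ hl2 hc2) ?_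
      intro l hl hql
      by_cases hal : a ∈ l
      · exact Or.inl hal
      by_cases hcl : c ∈ l
      · exact Or.inr hcl
      exfalso
      by_cases hbl : b ∈ l
      · exact hEb ⟨l, hl, hql, (by rintro rfl; exact hal ha1),
          (by rintro rfl; exact hcl hc3), hbl⟩
      · exact hav1 ⟨l, hl, hql, hal, hbl, hcl⟩
    obtain ⟨eb, hebL, hqeb, heb1, heb3, hbeb⟩ := hEb
    -- all three vertex extras exist : cover {a, b, c}
    have nea3 : ea ≠ l3 := by rintro rfl; exact hal3 haea
    have neb2 : eb ≠ l2 := by rintro rfl; exact hbl2 hbeb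
    have nec1 : ec ≠ l1 := by rintro rfl; exact hcl1 hcec
    have neab : ea ≠ eb := by
      rintro rfl; exact hea1 (C.two_pt heaL hl1 haea ha1 hbeb hb1 hab)
    have neac : ea ≠ ec := by
      rintro rfl; exact hea2 (C.two_pt heaL hl2 haea ha2 hcec hc2 hac)
    have nebc : eb ≠ ec := by
      rintro rfl; exact heb3 (C.two_pt hebL hl3 hbeb hb3 hcec hc3 hbc)
    refine C.cover3 (C.hsub _ hl1 ha1) (C.hsub _ hl1 hb1) (C.hsub _ hl2 hc2) ?_ ?_ hp14
    · intro l hl hql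
      by_cases hal : a ∈ l
      · exact Or.inl hal
      by_cases hbl : b ∈ l
      · exact Or.inr (Or.inl hbl)
      by_cases hcl : c ∈ l
      · exact Or.inr (Or.inr hcl)
      exact absurd ⟨l, hl, hql, hal, hbl, hcl⟩ hav1
    · exact C.Lge9 hl1 hl2 hl3 heaL hebL hecL hq1 hq2 hq3 hqea hqeb hqec
        hne12 hne13 hea1.symm heb1.symm nec1.symm hne23 hea2.symm neb2.symm hec2.symm
        nea3.symm heb3.symm hec3.symm neab neac nebc
  -- at least one avoider e
  obtain ⟨e, heL, hqe, hae, hbe, hce⟩ := hav1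
  have hel1 : e ≠ l1 := by rintro rfl; exact hae ha1
  have hel2 : e ≠ l2 := by rintro rfl; exact hae ha2
  have hel3 : e ≠ l3 := by rintro rfl; exact hbe hb3
  by_cases hav2 : ∃ f, (f ∈ C.L ∧ C.q ∉ f ∧ a ∉ f ∧ b ∉ f ∧ c ∉ f) ∧ f ≠ e
  swap
  · -- exactly one avoider
    -- intersection points of e with triangle lines
    obtain ⟨z1, hz1⟩ := hmeet e l1 heL hqe hl1 hq1 hel1
    obtain ⟨hz1e, hz1l⟩ := mem_inter.1 hz1
    obtain ⟨z2, hz2⟩ := hmeet e l2 heL hqe hl2 hq2 hel2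
    obtain ⟨hz2e, hz2l⟩ := mem_inter.1 hz2
    obtain ⟨z3, hz3⟩ := hmeet e l3 heL hqe hl3 hq3 hel3
    obtain ⟨hz3e, hz3l⟩ := mem_inter.1 hz3
    obtain ⟨se, hse⟩ := C.nem heL
    have avone : ∀ l, l ∈ C.L → C.q ∉ l → a ∉ l → b ∉ l → c ∉ l → l = e := by
      intro l hl hql h1 h2 h3
      by_contra hne
      exact hav2 ⟨l, ⟨hl, hql, h1, h2, h3⟩, hne⟩
    by_cases hEb : ∃ g, g ∈ C.L ∧ C.q ∉ g ∧ g ≠ l1 ∧ g ≠ l3 ∧ b ∈ g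
    · obtain ⟨eb, hebL, hqeb, heb1, heb3, hbeb⟩ := hEb
      have neb2 : eb ≠ l2 := by rintro rfl; exact hbl2 hbeb
      have nebe : eb ≠ e := by rintro rfl; exact hbe hbeb
      by_cases hEc : ∃ g, g ∈ C.L ∧ C.q ∉ g ∧ g ≠ l2 ∧ g ≠ l3 ∧ c ∈ g
      · obtain ⟨ec, hecL, hqec, hec2, hec3, hcec⟩ := hEc
        have nec1 : ec ≠ l1 := by rintro rfl; exact hcl1 hcec
        have nece : ec ≠ e := by rintro rfl; exact hce hcec
        have nebc : eb ≠ ec := by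
          rintro rfl; exact heb3 (C.two_pt hebL hl3 hbeb hb3 hcec hc3 hbc)
        by_cases hEa : ∃ g, g ∈ C.L ∧ C.q ∉ g ∧ g ≠ l1 ∧ g ≠ l2 ∧ a ∈ g
        · -- (T,T,T) : cover {a, b, w} with w on e and ec
          obtain ⟨ea, heaL, hqea, hea1, hea2, haea⟩ := hEa
          have nea3 : ea ≠ l3 := by rintro rfl; exact hal3 haea
          have neae : ea ≠ e := by rintro rfl; exact hae haea
          have neab : ea ≠ eb := by
            rintro rfl; exact hea1 (C.two_pt heaL hl1 haea ha1 hbeb hb1 hab)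
          obtain ⟨w, hww⟩ := hmeet e ec heL hqe hecL hqec (fun h => nece h.symm)
          obtain ⟨hwe, hwec⟩ := mem_inter.1 hww
          refine C.cover3 (C.hsub _ hl1 ha1) (C.hsub _ hl1 hb1) (C.hsub _ heL hwe) ?_ ?_ hp14
          · intro l hl hql
            by_cases hal : a ∈ l
            · exact Or.inl hal
            by_cases hbl : b ∈ l
            · exact Or.inr (Or.inl hbl)
            by_cases hcl : c ∈ l
            · -- l = ec
              have hll2 : l ≠ l2 := by rintro rfl; exact hal ha2
              have hll3 : l ≠ l3 := by rintro rfl; exact hbl hb3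
              have : l = ec := by
                by_contra hlec
                exact C.degfour hl2 hl3 hecL hl hne23 hec2.symm (fun h => hll2 h.symm)
                  hec3.symm (fun h => hll3 h.symm) (fun h => hlec h.symm)
                  hc2 hc3 hcec hcl
              exact Or.inr (Or.inr (this ▸ hwec))
            · have : l = e := avone l hl hql hal hbl hcl
              exact Or.inr (Or.inr (this ▸ hwe))
          · exact C.Lge9 hl1 hl2 hl3 heaL hebL heL hq1 hq2 hq3 hqea hqeb hqe
              hne12 hne13 hea1.symm heb1.symm hel1.symm hne23 hea2.symm neb2.symm hel2.symm
              nea3.symm heb3.symm hel3.symm neab neae nebe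
        · -- (F,T,T) : cover {b, c, pt e}
          refine C.cover3 (C.hsub _ hl1 hb1) (C.hsub _ hl2 hc2) (C.hsub _ heL hse) ?_ ?_ hp14
          · intro l hl hql
            by_cases hbl : b ∈ l
            · exact Or.inl hbl
            by_cases hcl : c ∈ l
            · exact Or.inr (Or.inl hcl)
            by_cases hal : a ∈ l
            · exact absurd ⟨l, hl, hql, (by rintro rfl; exact hbl hb1),
                (by rintro rfl; exact hcl hc2), hal⟩ hEa
            · have : l = e := avone l hl hql hal hbl hcl
              exact Or.inr (Or.inr (this ▸ hse))
          · exact C.Lge9 hl1 hl2 hl3 hebL hecL heL hq1 hq2 hq3 hqeb hqec hqe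
              hne12 hne13 heb1.symm nec1.symm hel1.symm hne23 neb2.symm hec2.symm hel2.symm
              heb3.symm hec3.symm hel3.symm nebc nebe nece
      · by_cases hEa : ∃ g, g ∈ C.L ∧ C.q ∉ g ∧ g ≠ l1 ∧ g ≠ l2 ∧ a ∈ g
        · -- (T,T,F) : cover {a, b, pt e}
          obtain ⟨ea, heaL, hqea, hea1, hea2, haea⟩ := hEa
          have nea3 : ea ≠ l3 := by rintro rfl; exact hal3 haea
          have neae : ea ≠ e := by rintro rfl; exact hae haea
          have neab : ea ≠ eb := by
            rintro rfl; exact hea1 (C.two_pt heaL hl1 haea ha1 hbeb hb1 hab)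
          refine C.cover3 (C.hsub _ hl1 ha1) (C.hsub _ hl1 hb1) (C.hsub _ heL hse) ?_ ?_ hp14
          · intro l hl hql
            by_cases hal : a ∈ l
            · exact Or.inl hal
            by_cases hbl : b ∈ l
            · exact Or.inr (Or.inl hbl)
            by_cases hcl : c ∈ l
            · exact absurd ⟨l, hl, hql, (by rintro rfl; exact hal ha2),
                (by rintro rfl; exact hbl hb3), hcl⟩ hEc
            · have : l = e := avone l hl hql hal hbl hcl
              exact Or.inr (Or.inr (this ▸ hse))
          · exact C.Lge9 hl1 hl2 hl3 heaL hebL heL hq1 hq2 hq3 hqea hqeb hqe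
              hne12 hne13 hea1.symm heb1.symm hel1.symm hne23 hea2.symm neb2.symm hel2.symm
              nea3.symm heb3.symm hel3.symm neab neae nebe
        · -- (F,T,F) : cover {b, z2}
          refine C.cover2 (C.hsub _ hl1 hb1) (C.hsub _ hl2 hz2l) ?_
          intro l hl hql
          by_cases hbl : b ∈ l
          · exact Or.inl hbl
          by_cases hzl : z2 ∈ l
          · exact Or.inr hzl
          exfalso
          by_cases hal : a ∈ l
          · have h1 : l ≠ l1 := by rintro rfl; exact hbl hb1
            have h2 : l ≠ l2 := by rintro rfl; exact hzl hz2l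
            exact hEa ⟨l, hl, hql, h1, h2, hal⟩
          by_cases hcl : c ∈ l
          · have h2 : l ≠ l2 := by rintro rfl; exact hzl hz2l
            have h3 : l ≠ l3 := by rintro rfl; exact hbl hb3
            exact hEc ⟨l, hl, hql, h2, h3, hcl⟩
          · exact hzl ((avone l hl hql hal hbl hcl) ▸ hz2e)
    · by_cases hEc : ∃ g, g ∈ C.L ∧ C.q ∉ g ∧ g ≠ l2 ∧ g ≠ l3 ∧ c ∈ g
      · obtain ⟨ec, hecL, hqec, hec2, hec3, hcec⟩ := hEc
        have nec1 : ec ≠ l1 := by rintro rfl; exact hcl1 hcec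
        have nece : ec ≠ e := by rintro rfl; exact hce hcec
        by_cases hEa : ∃ g, g ∈ C.L ∧ C.q ∉ g ∧ g ≠ l1 ∧ g ≠ l2 ∧ a ∈ g
        · -- (T,F,T) : cover {a, c, pt e}
          obtain ⟨ea, heaL, hqea, hea1, hea2, haea⟩ := hEa
          have nea3 : ea ≠ l3 := by rintro rfl; exact hal3 haea
          have neae : ea ≠ e := by rintro rfl; exact hae haea
          have neac : ea ≠ ec := by
            rintro rfl; exact hea2 (C.two_pt heaL hl2 haea ha2 hcec hc2 hac)
          refine C.cover3 (C.hsub _ hl1 ha1) (C.hsub _ hl2 hc2) (C.hsub _ heL hse) ?_ ?_ hp14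
          · intro l hl hql
            by_cases hal : a ∈ l
            · exact Or.inl hal
            by_cases hcl : c ∈ l
            · exact Or.inr (Or.inl hcl)
            by_cases hbl : b ∈ l
            · exact absurd ⟨l, hl, hql, (by rintro rfl; exact hal ha1),
                (by rintro rfl; exact hcl hc3), hbl⟩ hEb
            · have : l = e := avone l hl hql hal hbl hcl
              exact Or.inr (Or.inr (this ▸ hse))
          · exact C.Lge9 hl1 hl2 hl3 heaL hecL heL hq1 hq2 hq3 hqea hqec hqe
              hne12 hne13 hea1.symm nec1.symm hel1.symm hne23 hea2.symm hec2.symm hel2.symm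
              nea3.symm hec3.symm hel3.symm neac neae nece
        · -- (F,F,T) : cover {c, z1}
          refine C.cover2 (C.hsub _ hl2 hc2) (C.hsub _ hl1 hz1l) ?_
          intro l hl hql
          by_cases hcl : c ∈ l
          · exact Or.inl hcl
          by_cases hzl : z1 ∈ l
          · exact Or.inr hzl
          exfalso
          by_cases hal : a ∈ l
          · have h1 : l ≠ l1 := by rintro rfl; exact hzl hz1l
            have h2 : l ≠ l2 := by rintro rfl; exact hcl hc2
            exact hEa ⟨l, hl, hql, h1, h2, hal⟩
          by_cases hbl : b ∈ l
          · have h1 : l ≠ l1 := by rintro rfl; exact hzl hz1l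
            have h3 : l ≠ l3 := by rintro rfl; exact hcl hc3
            exact hEb ⟨l, hl, hql, h1, h3, hbl⟩
          · exact hzl ((avone l hl hql hal hbl hcl) ▸ hz1e)
      · -- (·,F,F) : cover {a, z3}
        refine C.cover2 (C.hsub _ hl1 ha1) (C.hsub _ hl3 hz3l) ?_
        intro l hl hql
        by_cases hal : a ∈ l
        · exact Or.inl hal
        by_cases hzl : z3 ∈ l
        · exact Or.inr hzl
        exfalso
        by_cases hbl : b ∈ l
        · have h1 : l ≠ l1 := by rintro rfl; exact hal ha1
          have h3 : l ≠ l3 := by rintro rfl; exact hzl hz3l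
          exact hEb ⟨l, hl, hql, h1, h3, hbl⟩
        by_cases hcl : c ∈ l
        · have h2 : l ≠ l2 := by rintro rfl; exact hal ha2
          have h3 : l ≠ l3 := by rintro rfl; exact hzl hz3l
          exact hEc ⟨l, hl, hql, h2, h3, hcl⟩
        · exact hzl ((avone l hl hql hal hbl hcl) ▸ hz3e)
  -- at least two avoiders e, f
  obtain ⟨f, ⟨hfL, hqf, haf, hbf, hcf⟩, hfe⟩ := hav2
  have hef : e ≠ f := fun h => hfe h.symm
  obtain ⟨w, hwe, hwf, hw123⟩ := host e f heL hqe hae hbe hce hfL hqf haf hbf hcf hef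
  have hfl1 : f ≠ l1 := by rintro rfl; exact haf ha1
  have hfl2 : f ≠ l2 := by rintro rfl; exact haf ha2
  have hfl3 : f ≠ l3 := by rintro rfl; exact hbf hb3
  by_cases hav3 : ∃ g, (g ∈ C.L ∧ C.q ∉ g ∧ a ∉ g ∧ b ∉ g ∧ c ∉ g) ∧ g ≠ e ∧ g ≠ f
  swap
  · -- exactly two avoiders
    have avtwo : ∀ l, l ∈ C.L → C.q ∉ l → a ∉ l → b ∉ l → c ∉ l → l = e ∨ l = f := by
      intro l hl hql h1 h2 h3
      by_contra hcon
      push_neg at hcon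
      exact hav3 ⟨l, ⟨hl, hql, h1, h2, h3⟩, hcon.1, hcon.2⟩
    have fin2 : ∀ (H O1 O2 : Finset α) (v1 v2 vO : α),
        H ∈ C.L → O1 ∈ C.L → O2 ∈ C.L → C.q ∉ H → C.q ∉ O1 → C.q ∉ O2 →
        H ≠ O1 → H ≠ O2 → O1 ≠ O2 →
        v1 ∈ H → v1 ∈ O1 → v1 ∉ O2 → v2 ∈ H → v2 ∈ O2 → v2 ∉ O1 →
        vO ∈ O1 → vO ∈ O2 → vO ∉ H → v1 ≠ v2 →
        w ∈ H →
        (∀ l, l ∈ C.L → C.q ∉ l → v1 ∉ l → v2 ∉ l → vO ∉ l → (l = e ∨ l = f)) →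
        v1 ∉ e → v2 ∉ e → vO ∉ e → v1 ∉ f → v2 ∉ f → vO ∉ f →
        (C.r + 1) * tau C.P C.L ≤ C.P.card + C.L.card := by
      intro H O1 O2 v1 v2 vO hH hO1 hO2 hqH hqO1 hqO2 hHO1 hHO2 hO12
        hv1H hv1O1 hv1O2 hv2H hv2O2 hv2O1 hvOO1 hvOO2 hvOH hv12 hwH
        avcls hv1e hv2e hvOe hv1f hv2f hvOf
      have heH : e ≠ H := by rintro rfl; exact hv1e hv1H
      have heO1 : e ≠ O1 := by rintro rfl; exact hv1e hv1O1
      have heO2 : e ≠ O2 := by rintro rfl; exact hv2e hv2O2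
      have hfH : f ≠ H := by rintro rfl; exact hv1f hv1H
      have hfO1 : f ≠ O1 := by rintro rfl; exact hv1f hv1O1
      have hfO2 : f ≠ O2 := by rintro rfl; exact hv2f hv2O2
      by_cases hE1 : ∃ g, g ∈ C.L ∧ C.q ∉ g ∧ g ≠ H ∧ g ≠ O1 ∧ v1 ∈ g
      · obtain ⟨g1, hg1L, hqg1, hg1H, hg1O1, hv1g1⟩ := hE1
        have hg1O2 : g1 ≠ O2 := by rintro rfl; exact hv1O2 hv1g1
        have hg1e : g1 ≠ e := by rintro rfl; exact hv1e hv1g1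
        have hg1f : g1 ≠ f := by rintro rfl; exact hv1f hv1g1
        -- uniqueness of the v1-extra
        have uniq1 : ∀ l, l ∈ C.L → v1 ∈ l → l ≠ H → l ≠ O1 → l = g1 := by
          intro l hl hv1l hlH hlO1
          by_contra hlg1
          exact C.degfour hH hO1 hg1L hl hHO1 hg1H.symm (fun h => hlH h.symm)
            hg1O1.symm (fun h => hlO1 h.symm) (fun h => hlg1 h.symm) hv1H hv1O1 hv1g1 hv1l
        by_cases hE2 : ∃ g, g ∈ C.L ∧ C.q ∉ g ∧ g ≠ H ∧ g ≠ O2 ∧ v2 ∈ g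
        · obtain ⟨g2, hg2L, hqg2, hg2H, hg2O2, hv2g2⟩ := hE2
          have hg2O1 : g2 ≠ O1 := by rintro rfl; exact hv2O1 hv2g2
          have hg2e : g2 ≠ e := by rintro rfl; exact hv2e hv2g2
          have hg2f : g2 ≠ f := by rintro rfl; exact hv2f hv2g2
          have hg12 : g1 ≠ g2 := by
            rintro rfl; exact hg1H (C.two_pt hg1L hH hv1g1 hv1H hv2g2 hv2H hv12)
          have uniq2 : ∀ l, l ∈ C.L → v2 ∈ l → l ≠ H → l ≠ O2 → l = g2 := by
            intro l hl hv2l hlH hlO2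
            by_contra hlg2
            exact C.degfour hH hO2 hg2L hl hHO2 hg2H.symm (fun h => hlH h.symm)
              hg2O2.symm (fun h => hlO2 h.symm) (fun h => hlg2 h.symm) hv2H hv2O2 hv2g2 hv2l
          obtain ⟨s, hss⟩ := hmeet g1 g2 hg1L hqg1 hg2L hqg2 hg12
          obtain ⟨hsg1, hsg2⟩ := mem_inter.1 hss
          refine C.cover3 (C.hsub _ hH hwH) (C.hsub _ hO1 hvOO1) (C.hsub _ hg1L hsg1)
            ?_ ?_ hp14
          · intro l hl hql
            by_cases hwl : w ∈ l
            · exact Or.inl hwl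
            by_cases hvOl : vO ∈ l
            · exact Or.inr (Or.inl hvOl)
            by_cases hv1l : v1 ∈ l
            · have h1 : l ≠ H := by rintro rfl; exact hwl hwH
              have h2 : l ≠ O1 := by rintro rfl; exact hvOl hvOO1
              exact Or.inr (Or.inr ((uniq1 l hl hv1l h1 h2) ▸ hsg1))
            by_cases hv2l : v2 ∈ l
            · have h1 : l ≠ H := by rintro rfl; exact hwl hwH
              have h2 : l ≠ O2 := by rintro rfl; exact hvOl hvOO2
              exact Or.inr (Or.inr ((uniq2 l hl hv2l h1 h2) ▸ hsg2))
            rcases avcls l hl hql hv1l hv2l hvOl with rfl | rfl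
            · exact absurd hwe hwl
            · exact absurd hwf hwl
          · exact C.Lge9 hH hO1 hO2 hg1L heL hfL hqH hqO1 hqO2 hqg1 hqe hqf
              hHO1 hHO2 hg1H.symm heH.symm hfH.symm hO12 hg1O1.symm heO1.symm hfO1.symm
              hg1O2.symm heO2.symm hfO2.symm hg1e hg1f hef
        · refine C.cover3 (C.hsub _ hH hwH) (C.hsub _ hO1 hvOO1) (C.hsub _ hg1L hv1g1)
            ?_ ?_ hp14
          · intro l hl hql
            by_cases hwl : w ∈ l
            · exact Or.inl hwl
            by_cases hvOl : vO ∈ l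
            · exact Or.inr (Or.inl hvOl)
            by_cases hv1l : v1 ∈ l
            · have h1 : l ≠ H := by rintro rfl; exact hwl hwH
              have h2 : l ≠ O1 := by rintro rfl; exact hvOl hvOO1
              exact Or.inr (Or.inr ((uniq1 l hl hv1l h1 h2) ▸ hv1g1))
            by_cases hv2l : v2 ∈ l
            · exfalso
              have h1 : l ≠ H := by rintro rfl; exact hwl hwH
              have h2 : l ≠ O2 := by rintro rfl; exact hvOl hvOO2
              exact hE2 ⟨l, hl, hql, h1, h2, hv2l⟩
            rcases avcls l hl hql hv1l hv2l hvOl with rfl | rfl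
            · exact absurd hwe hwl
            · exact absurd hwf hwl
          · exact C.Lge9 hH hO1 hO2 hg1L heL hfL hqH hqO1 hqO2 hqg1 hqe hqf
              hHO1 hHO2 hg1H.symm heH.symm hfH.symm hO12 hg1O1.symm heO1.symm hfO1.symm
              hg1O2.symm heO2.symm hfO2.symm hg1e hg1f hef
      · by_cases hE2 : ∃ g, g ∈ C.L ∧ C.q ∉ g ∧ g ≠ H ∧ g ≠ O2 ∧ v2 ∈ g
        · obtain ⟨g2, hg2L, hqg2, hg2H, hg2O2, hv2g2⟩ := hE2
          have hg2O1 : g2 ≠ O1 := by rintro rfl; exact hv2O1 hv2g2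
          have hg2e : g2 ≠ e := by rintro rfl; exact hv2e hv2g2
          have hg2f : g2 ≠ f := by rintro rfl; exact hv2f hv2g2
          have uniq2 : ∀ l, l ∈ C.L → v2 ∈ l → l ≠ H → l ≠ O2 → l = g2 := by
            intro l hl hv2l hlH hlO2
            by_contra hlg2
            exact C.degfour hH hO2 hg2L hl hHO2 hg2H.symm (fun h => hlH h.symm)
              hg2O2.symm (fun h => hlO2 h.symm) (fun h => hlg2 h.symm) hv2H hv2O2 hv2g2 hv2l
          refine C.cover3 (C.hsub _ hH hwH) (C.hsub _ hO1 hvOO1) (C.hsub _ hg2L hv2g2)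
            ?_ ?_ hp14
          · intro l hl hql
            by_cases hwl : w ∈ l
            · exact Or.inl hwl
            by_cases hvOl : vO ∈ l
            · exact Or.inr (Or.inl hvOl)
            by_cases hv1l : v1 ∈ l
            · exfalso
              have h1 : l ≠ H := by rintro rfl; exact hwl hwH
              have h2 : l ≠ O1 := by rintro rfl; exact hvOl hvOO1
              exact hE1 ⟨l, hl, hql, h1, h2, hv1l⟩
            by_cases hv2l : v2 ∈ l
            · have h1 : l ≠ H := by rintro rfl; exact hwl hwH
              have h2 : l ≠ O2 := by rintro rfl; exact hvOl hvOO2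
              exact Or.inr (Or.inr ((uniq2 l hl hv2l h1 h2) ▸ hv2g2))
            rcases avcls l hl hql hv1l hv2l hvOl with rfl | rfl
            · exact absurd hwe hwl
            · exact absurd hwf hwl
          · exact C.Lge9 hH hO1 hO2 hg2L heL hfL hqH hqO1 hqO2 hqg2 hqe hqf
              hHO1 hHO2 hg2H.symm heH.symm hfH.symm hO12 hg2O1.symm heO1.symm hfO1.symm
              hg2O2.symm heO2.symm hfO2.symm hg2e hg2f hef
        · refine C.cover2 (C.hsub _ hH hwH) (C.hsub _ hO1 hvOO1) ?_
          intro l hl hql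
          by_cases hwl : w ∈ l
          · exact Or.inl hwl
          by_cases hvOl : vO ∈ l
          · exact Or.inr hvOl
          exfalso
          by_cases hv1l : v1 ∈ l
          · have h1 : l ≠ H := by rintro rfl; exact hwl hwH
            have h2 : l ≠ O1 := by rintro rfl; exact hvOl hvOO1
            exact hE1 ⟨l, hl, hql, h1, h2, hv1l⟩
          by_cases hv2l : v2 ∈ l
          · have h1 : l ≠ H := by rintro rfl; exact hwl hwH
            have h2 : l ≠ O2 := by rintro rfl; exact hvOl hvOO2
            exact hE2 ⟨l, hl, hql, h1, h2, hv2l⟩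
          rcases avcls l hl hql hv1l hv2l hvOl with rfl | rfl
          · exact absurd hwe hwl
          · exact absurd hwf hwl
    rcases hw123 with hwH | hwH | hwH
    · exact fin2 l1 l2 l3 a b c hl1 hl2 hl3 hq1 hq2 hq3 hne12 hne13 hne23
        ha1 ha2 hal3 hb1 hb3 hbl2 hc2 hc3 hcl1 hab hwH
        (fun l hl hql h1 h2 h3 => avtwo l hl hql h1 h2 h3) hae hbe hce haf hbf hcf
    · exact fin2 l2 l1 l3 a c b hl2 hl1 hl3 hq2 hq1 hq3 hne12.symm hne23 hne13
        ha2 ha1 hal3 hc2 hc3 hcl1 hb1 hb3 hbl2 hac hwH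
        (fun l hl hql h1 h2 h3 => avtwo l hl hql h1 h3 h2) hae hce hbe haf hcf hbf
    · exact fin2 l3 l1 l2 b c a hl3 hl1 hl2 hq3 hq1 hq2 hne13.symm hne23.symm hne12
        hb3 hb1 hbl2 hc3 hc2 hcl1 ha1 ha2 hal3 hbc hwH
        (fun l hl hql h1 h2 h3 => avtwo l hl hql h3 h1 h2) hbe hce hae hbf hcf haf
  -- at least three avoiders
  obtain ⟨g, ⟨hgL, hqg, hag, hbg, hcg⟩, hge, hgf⟩ := hav3
  have hgl1 : g ≠ l1 := by rintro rfl; exact hag ha1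
  have hgl2 : g ≠ l2 := by rintro rfl; exact hag ha2
  have hgl3 : g ≠ l3 := by rintro rfl; exact hbg hb3
  have qonly : ∀ (x : α) (mm mm' : Finset α), (mm = C.m1 ∨ mm = C.m2 ∨ mm = C.m3) →
      (mm' = C.m1 ∨ mm' = C.m2 ∨ mm' = C.m3) → mm ≠ mm' → x ∈ mm → x ∈ mm' → x = C.q := by
    intro x mm mm' h1 h2 hne hx1 hx2
    obtain ⟨hL1, hq1'⟩ := C.mem_of_or h1
    obtain ⟨hL2, hq2'⟩ := C.mem_of_or h2
    have : x ∈ mm ∩ mm' := mem_inter.2 ⟨hx1, hx2⟩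
    rw [C.inter_eq hL1 hL2 hne hq1' hq2'] at this
    exact mem_singleton.1 this
  -- with three avoiders, there are no extra lines at two distinct vertices
  have killtwo : ∀ (J ga gb : Finset α) (va vb : α),
      J ∈ C.L → va ∈ J → vb ∈ J → va ≠ vb →
      ga ∈ C.L → C.q ∉ ga → va ∈ ga → ga ≠ l1 → ga ≠ l2 → ga ≠ l3 →
      va ∉ e → va ∉ f → va ∉ g →
      gb ∈ C.L → C.q ∉ gb → vb ∈ gb → gb ≠ l1 → gb ≠ l2 → gb ≠ l3 →
      vb ∉ e → vb ∉ f → vb ∉ g →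
      ga ≠ J → gb ≠ J → False := by
    intro J ga gb va vb hJL hvaJ hvbJ hvab hgaL hqga hvaga hgal1 hgal2 hgal3
      hvae hvaf hvag hgbL hqgb hvbgb hgbl1 hgbl2 hgbl3 hvbe hvbf hvbg hgaJ hgbJ
    have hgagb : ga ≠ gb := by
      rintro rfl
      exact hgaJ (C.two_pt hgaL hJL hvaga hvaJ hvbgb hvbJ hvab)
    have hgae : ga ≠ e := by rintro rfl; exact hvae hvaga
    have hgaf : ga ≠ f := by rintro rfl; exact hvaf hvaga
    have hgag : ga ≠ g := by rintro rfl; exact hvag hvaga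
    have hgbe : gb ≠ e := by rintro rfl; exact hvbe hvbgb
    have hgbf : gb ≠ f := by rintro rfl; exact hvbf hvbgb
    have hgbg : gb ≠ g := by rintro rfl; exact hvbg hvbgb
    obtain ⟨s, hss⟩ := hmeet ga gb hgaL hqga hgbL hqgb hgagb
    obtain ⟨hsga, hsgb⟩ := mem_inter.1 hss
    have hsab : ga ∩ gb = {s} := C.inter_eq hgaL hgbL hgagb hsga hsgb
    by_cases hs : s ∈ e ∨ s ∈ f ∨ s ∈ g
    · -- secondary packing
      have inner : ∀ A1 A2 A3 : Finset α,
          A1 ∈ C.L → C.q ∉ A1 → a ∉ A1 → b ∉ A1 → c ∉ A1 →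
          A2 ∈ C.L → C.q ∉ A2 → a ∉ A2 → b ∉ A2 → c ∉ A2 →
          A3 ∈ C.L → C.q ∉ A3 → a ∉ A3 → b ∉ A3 → c ∉ A3 →
          A1 ≠ A2 → A1 ≠ A3 → A2 ≠ A3 →
          va ∉ A1 → va ∉ A2 → va ∉ A3 → vb ∉ A1 → vb ∉ A2 → vb ∉ A3 →
          s ∈ A1 → False := by
        intro A1 A2 A3 h1L hq1' ha1' hb1' hc1' h2L hq2' ha2' hb2' hc2'
          h3L hq3' ha3' hb3' hc3' h12 h13 h23 hva1 hva2 hva3 hvb1 hvb2 hvb3 hsA1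
        have n1l1 : A1 ≠ l1 := by rintro rfl; exact ha1' ha1
        have n1l2 : A1 ≠ l2 := by rintro rfl; exact ha1' ha2
        have n1l3 : A1 ≠ l3 := by rintro rfl; exact hb1' hb3
        have n2l1 : A2 ≠ l1 := by rintro rfl; exact ha2' ha1
        have n2l2 : A2 ≠ l2 := by rintro rfl; exact ha2' ha2
        have n2l3 : A2 ≠ l3 := by rintro rfl; exact hb2' hb3
        have n3l1 : A3 ≠ l1 := by rintro rfl; exact ha3' ha1
        have n3l2 : A3 ≠ l2 := by rintro rfl; exact ha3' ha2
        have n3l3 : A3 ≠ l3 := by rintro rfl; exact hb3' hb3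
        have nga1 : ga ≠ A1 := by rintro rfl; exact hva1 hvaga
        have nga2 : ga ≠ A2 := by rintro rfl; exact hva2 hvaga
        have nga3 : ga ≠ A3 := by rintro rfl; exact hva3 hvaga
        have ngb1 : gb ≠ A1 := by rintro rfl; exact hvb1 hvbgb
        have ngb2 : gb ≠ A2 := by rintro rfl; exact hvb2 hvbgb
        have ngb3 : gb ≠ A3 := by rintro rfl; exact hvb3 hvbgb
        obtain ⟨p2, hp2'⟩ := hmeet A2 ga h2L hq2' hgaL hqga (fun h => nga2 h.symm)
        obtain ⟨hp2A, hp2ga⟩ := mem_inter.1 hp2'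
        obtain ⟨p3, hp3'⟩ := hmeet A3 ga h3L hq3' hgaL hqga (fun h => nga3 h.symm)
        obtain ⟨hp3A, hp3ga⟩ := mem_inter.1 hp3'
        -- a pencil line avoiding p2 and p3
        obtain ⟨mm, hmmor, hmp2, hmp3⟩ : ∃ mm, (mm = C.m1 ∨ mm = C.m2 ∨ mm = C.m3) ∧
            p2 ∉ mm ∧ p3 ∉ mm := by
          by_contra hcon
          push_neg at hcon
          have h1 := hcon C.m1 (Or.inl rfl)
          have h2 := hcon C.m2 (Or.inr (Or.inl rfl))
          have h3 := hcon C.m3 (Or.inr (Or.inr rfl))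
          have hq2A : p2 ≠ C.q := by rintro rfl; exact hq2' hp2A
          have hq3A : p3 ≠ C.q := by rintro rfl; exact hq3' hp3A
          have H1 : p2 ∈ C.m1 ∨ p3 ∈ C.m1 := by
            by_cases hp : p2 ∈ C.m1
            · exact Or.inl hp
            · exact Or.inr (h1 hp)
          have H2 : p2 ∈ C.m2 ∨ p3 ∈ C.m2 := by
            by_cases hp : p2 ∈ C.m2
            · exact Or.inl hp
            · exact Or.inr (h2 hp)
          have H3 : p2 ∈ C.m3 ∨ p3 ∈ C.m3 := by
            by_cases hp : p2 ∈ C.m3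
            · exact Or.inl hp
            · exact Or.inr (h3 hp)
          rcases H1 with hA | hA
          · rcases H2 with hB | hB
            · exact hq2A (qonly p2 C.m1 C.m2 (Or.inl rfl) (Or.inr (Or.inl rfl)) C.hm12 hA hB)
            · rcases H3 with hC | hC
              · exact hq2A (qonly p2 C.m1 C.m3 (Or.inl rfl) (Or.inr (Or.inr rfl)) C.hm13 hA hC)
              · exact hq3A (qonly p3 C.m2 C.m3 (Or.inr (Or.inl rfl)) (Or.inr (Or.inr rfl))
                  C.hm23 hB hC)
          · rcases H2 with hB | hB
            · rcases H3 with hC | hC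
              · exact hq2A (qonly p2 C.m2 C.m3 (Or.inr (Or.inl rfl)) (Or.inr (Or.inr rfl))
                  C.hm23 hB hC)
              · exact hq3A (qonly p3 C.m1 C.m3 (Or.inl rfl) (Or.inr (Or.inr rfl)) C.hm13 hA hC)
            · exact hq3A (qonly p3 C.m1 C.m2 (Or.inl rfl) (Or.inr (Or.inl rfl)) C.hm12 hA hB)
        obtain ⟨hmmL, hqmm⟩ := C.mem_of_or hmmor
        have nmm : ∀ Y : Finset α, C.q ∉ Y → Y ≠ mm := by
          rintro Y hY rfl; exact hY hqmm
        -- the 5-packing {A1, A2, A3, ga, mm}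
        have hA1ga : A1 ∩ ga = {s} :=
          C.inter_eq h1L hgaL (fun h => nga1 h.symm) hsA1 hsga
        have hA2ga : A2 ∩ ga = {p2} :=
          C.inter_eq h2L hgaL (fun h => nga2 h.symm) hp2A hp2ga
        have hA3ga : A3 ∩ ga = {p3} :=
          C.inter_eq h3L hgaL (fun h => nga3 h.symm) hp3A hp3ga
        refine C.no5 h1L h2L h3L hgaL hmmL h12 h13 (fun h => nga1 h.symm) (nmm A1 hq1')
          h23 (fun h => nga2 h.symm) (nmm A2 hq2') (fun h => nga3 h.symm) (nmm A3 hq3')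
          (nmm ga hqga) ?_ ?_ ?_ ?_ ?_ ?_ ?_ ?_ ?_ ?_
        · exact fun x hx1 hx2 hx3 => avkey A1 A2 A3 h1L hq1' ha1' hb1' hc1' h2L hq2' ha2'
            hb2' hc2' h12 h3L h13.symm h23.symm n3l1 n3l2 n3l3 x hx1 hx2 hx3
        · exact fun x hx1 hx2 hx3 => avkey A1 A2 ga h1L hq1' ha1' hb1' hc1' h2L hq2' ha2'
            hb2' hc2' h12 hgaL nga1 nga2 hgal1 hgal2 hgal3 x hx1 hx2 hx3
        · exact fun x hx1 hx2 hx3 => avkey A1 A2 mm h1L hq1' ha1' hb1' hc1' h2L hq2' ha2'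
            hb2' hc2' h12 hmmL (nmm A1 hq1').symm (nmm A2 hq2').symm
            (by rintro rfl; exact hq1 hqmm) (by rintro rfl; exact hq2 hqmm)
            (by rintro rfl; exact hq3 hqmm) x hx1 hx2 hx3
        · exact fun x hx1 hx2 hx3 => avkey A1 A3 ga h1L hq1' ha1' hb1' hc1' h3L hq3' ha3'
            hb3' hc3' h13 hgaL nga1 nga3 hgal1 hgal2 hgal3 x hx1 hx2 hx3
        · -- A1, A3, mm
          exact fun x hx1 hx2 hx3 => avkey A1 A3 mm h1L hq1' ha1' hb1' hc1' h3L hq3' ha3'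
            hb3' hc3' h13 hmmL (nmm A1 hq1').symm (nmm A3 hq3').symm
            (by rintro rfl; exact hq1 hqmm) (by rintro rfl; exact hq2 hqmm)
            (by rintro rfl; exact hq3 hqmm) x hx1 hx2 hx3
        · -- A1, ga, mm
          intro x hx1 hx2 hx3
          have : x = s := by
            have : x ∈ A1 ∩ ga := mem_inter.2 ⟨hx1, hx2⟩
            rw [hA1ga] at this; exact mem_singleton.1 this
          subst this
          exact C.degfour hgaL hgbL h1L hmmL hgagb nga1 (nmm ga hqga)
            ngb1 (nmm gb hqgb) (nmm A1 hq1') hsga hsgb hx1 hx3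
        · exact fun x hx1 hx2 hx3 => avkey A2 A3 ga h2L hq2' ha2' hb2' hc2' h3L hq3' ha3'
            hb3' hc3' h23 hgaL nga2 nga3 hgal1 hgal2 hgal3 x hx1 hx2 hx3
        · exact fun x hx1 hx2 hx3 => avkey A2 A3 mm h2L hq2' ha2' hb2' hc2' h3L hq3' ha3'
            hb3' hc3' h23 hmmL (nmm A2 hq2').symm (nmm A3 hq3').symm
            (by rintro rfl; exact hq1 hqmm) (by rintro rfl; exact hq2 hqmm)
            (by rintro rfl; exact hq3 hqmm) x hx1 hx2 hx3
        · -- A2, ga, mm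
          intro x hx1 hx2 hx3
          have : x = p2 := by
            have : x ∈ A2 ∩ ga := mem_inter.2 ⟨hx1, hx2⟩
            rw [hA2ga] at this; exact mem_singleton.1 this
          subst this
          exact hmp2 hx3
        · -- A3, ga, mm
          intro x hx1 hx2 hx3
          have : x = p3 := by
            have : x ∈ A3 ∩ ga := mem_inter.2 ⟨hx1, hx2⟩
            rw [hA3ga] at this; exact mem_singleton.1 this
          subst this
          exact hmp3 hx3
      rcases hs with hs | hs | hs
      · exact inner e f g heL hqe hae hbe hce hfL hqf haf hbf hcf hgL hqg hag hbg hcg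
          hef (fun h => hge h.symm) (fun h => hgf h.symm)
          hvae hvaf hvag hvbe hvbf hvbg hs
      · exact inner f e g hfL hqf haf hbf hcf heL hqe hae hbe hce hgL hqg hag hbg hcg
          hef.symm (fun h => hgf h.symm) (fun h => hge h.symm)
          hvaf hvae hvag hvbf hvbe hvbg hs
      · exact inner g e f hgL hqg hag hbg hcg heL hqe hae hbe hce hfL hqf haf hbf hcf
          hge hgf hef
          hvag hvae hvaf hvbg hvbe hvbf hs
    · push_neg at hs
      obtain ⟨hse, hsf, hsg⟩ := hs
      refine C.no5 heL hfL hgL hgaL hgbL hef (fun h => hge h.symm) hgae.symm hgbe.symm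
        (fun h => hgf h.symm) hgaf.symm hgbf.symm hgag.symm hgbg.symm hgagb
        ?_ ?_ ?_ ?_ ?_ ?_ ?_ ?_ ?_ ?_
      · exact fun x hx1 hx2 hx3 => avkey e f g heL hqe hae hbe hce hfL hqf haf hbf hcf hef
          hgL hge hgf hgl1 hgl2 hgl3 x hx1 hx2 hx3
      · exact fun x hx1 hx2 hx3 => avkey e f ga heL hqe hae hbe hce hfL hqf haf hbf hcf hef
          hgaL hgae hgaf hgal1 hgal2 hgal3 x hx1 hx2 hx3
      · exact fun x hx1 hx2 hx3 => avkey e f gb heL hqe hae hbe hce hfL hqf haf hbf hcf hef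
          hgbL hgbe hgbf hgbl1 hgbl2 hgbl3 x hx1 hx2 hx3
      · exact fun x hx1 hx2 hx3 => avkey e g ga heL hqe hae hbe hce hgL hqg hag hbg hcg
          (fun h => hge h.symm) hgaL hgae hgag hgal1 hgal2 hgal3 x hx1 hx2 hx3
      · exact fun x hx1 hx2 hx3 => avkey e g gb heL hqe hae hbe hce hgL hqg hag hbg hcg
          (fun h => hge h.symm) hgbL hgbe hgbg hgbl1 hgbl2 hgbl3 x hx1 hx2 hx3
      · -- e, ga, gb
        intro x hx1 hx2 hx3
        have : x = s := by
          have : x ∈ ga ∩ gb := mem_inter.2 ⟨hx2, hx3⟩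
          rw [hsab] at this; exact mem_singleton.1 this
        subst this
        exact hse hx1
      · exact fun x hx1 hx2 hx3 => avkey f g ga hfL hqf haf hbf hcf hgL hqg hag hbg hcg
          (fun h => hgf h.symm) hgaL hgaf hgag hgal1 hgal2 hgal3 x hx1 hx2 hx3
      · exact fun x hx1 hx2 hx3 => avkey f g gb hfL hqf haf hbf hcf hgL hqg hag hbg hcg
          (fun h => hgf h.symm) hgbL hgbf hgbg hgbl1 hgbl2 hgbl3 x hx1 hx2 hx3
      · intro x hx1 hx2 hx3
        have : x = s := by
          have : x ∈ ga ∩ gb := mem_inter.2 ⟨hx2, hx3⟩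
          rw [hsab] at this; exact mem_singleton.1 this
        subst this
        exact hsf hx1
      · intro x hx1 hx2 hx3
        have : x = s := by
          have : x ∈ ga ∩ gb := mem_inter.2 ⟨hx2, hx3⟩
          rw [hsab] at this; exact mem_singleton.1 this
        subst this
        exact hsg hx1
  by_cases hav4 : ∃ h, (h ∈ C.L ∧ C.q ∉ h ∧ a ∉ h ∧ b ∉ h ∧ c ∉ h) ∧ h ≠ e ∧ h ≠ f ∧ h ≠ g
  swap
  · -- exactly three avoiders e, f, g
    have avthree : ∀ l, l ∈ C.L → C.q ∉ l → a ∉ l → b ∉ l → c ∉ l →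
        l = e ∨ l = f ∨ l = g := by
      intro l hl hql h1 h2 h3
      by_contra hcon
      push_neg at hcon
      exact hav4 ⟨l, ⟨hl, hql, h1, h2, h3⟩, hcon.1, hcon.2.1, hcon.2.2⟩
    obtain ⟨w2, hw2e, hw2g, hw2123⟩ := host e g heL hqe hae hbe hce hgL hqg hag hbg hcg
      (fun h => hge h.symm)
    have hww2 : w ≠ w2 := by
      rintro rfl
      exact avkey e f g heL hqe hae hbe hce hfL hqf haf hbf hcf hef hgL hge hgf
        hgl1 hgl2 hgl3 w hwe hwf hw2g
    have fin3 : ∀ (H1 H2 H3 : Finset α) (v12 v13 v23 : α),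
        H1 ∈ C.L → H2 ∈ C.L → H3 ∈ C.L → C.q ∉ H1 → C.q ∉ H2 → C.q ∉ H3 →
        H1 ≠ H2 → H1 ≠ H3 → H2 ≠ H3 →
        v12 ∈ H1 → v12 ∈ H2 → v12 ∉ H3 →
        v13 ∈ H1 → v13 ∈ H3 → v13 ∉ H2 →
        v23 ∈ H2 → v23 ∈ H3 → v23 ∉ H1 →
        v12 ∉ e → v12 ∉ f → v12 ∉ g → v13 ∉ e → v13 ∉ f → v13 ∉ g →
        v23 ∉ e → v23 ∉ f → v23 ∉ g →
        w ∈ H1 → w2 ∈ H2 →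
        (∀ l, l ∈ C.L → C.q ∉ l → v12 ∉ l → v13 ∉ l → v23 ∉ l →
          l = e ∨ l = f ∨ l = g) →
        (∀ ga gb va vb J, J ∈ C.L → va ∈ J → vb ∈ J → va ≠ vb →
          ga ∈ C.L → C.q ∉ ga → va ∈ ga → ga ≠ H1 → ga ≠ H2 → ga ≠ H3 →
          va ∉ e → va ∉ f → va ∉ g →
          gb ∈ C.L → C.q ∉ gb → vb ∈ gb → gb ≠ H1 → gb ≠ H2 → gb ≠ H3 →
          vb ∉ e → vb ∉ f → vb ∉ g → ga ≠ J → gb ≠ J → False) →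
        (C.r + 1) * tau C.P C.L ≤ C.P.card + C.L.card := by
      intro H1 H2 H3 v12 v13 v23 hH1 hH2 hH3 hqH1 hqH2 hqH3 h12' h13' h23'
        hv12H1 hv12H2 hv12H3 hv13H1 hv13H3 hv13H2 hv23H2 hv23H3 hv23H1
        hv12e hv12f hv12g hv13e hv13f hv13g hv23e hv23f hv23g
        hwH1 hw2H2 avcls hkill
      have heH1 : e ≠ H1 := by rintro rfl; exact hv12e hv12H1
      have heH2 : e ≠ H2 := by rintro rfl; exact hv12e hv12H2
      have heH3 : e ≠ H3 := by rintro rfl; exact hv13e hv13H3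
      have hfH1 : f ≠ H1 := by rintro rfl; exact hv12f hv12H1
      have hfH2 : f ≠ H2 := by rintro rfl; exact hv12f hv12H2
      have hfH3 : f ≠ H3 := by rintro rfl; exact hv13f hv13H3
      have hgH1 : g ≠ H1 := by rintro rfl; exact hv12g hv12H1
      have hgH2 : g ≠ H2 := by rintro rfl; exact hv12g hv12H2
      have hgH3 : g ≠ H3 := by rintro rfl; exact hv13g hv13H3
      have covfin : ∀ s : α, s ∈ H3 →
          (∀ l, l ∈ C.L → C.q ∉ l → v12 ∈ l → w ∉ l → w2 ∉ l → s ∉ l → False) →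
          (∀ l, l ∈ C.L → C.q ∉ l → v13 ∈ l → w ∉ l → w2 ∉ l → s ∉ l → False) →
          (∀ l, l ∈ C.L → C.q ∉ l → v23 ∈ l → w ∉ l → w2 ∉ l → s ∉ l → False) →
          (C.r + 1) * tau C.P C.L ≤ C.P.card + C.L.card := by
        intro s hsH3 c12 c13 c23
        refine C.cover3 (C.hsub _ hH1 hwH1) (C.hsub _ hH2 hw2H2) (C.hsub _ hH3 hsH3)
          ?_ ?_ hp14
        · intro l hl hql
          by_cases hwl : w ∈ l
          · exact Or.inl hwl
          by_cases hw2l : w2 ∈ l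
          · exact Or.inr (Or.inl hw2l)
          by_cases hsl : s ∈ l
          · exact Or.inr (Or.inr hsl)
          exfalso
          by_cases h12l : v12 ∈ l
          · exact c12 l hl hql h12l hwl hw2l hsl
          by_cases h13l : v13 ∈ l
          · exact c13 l hl hql h13l hwl hw2l hsl
          by_cases h23l : v23 ∈ l
          · exact c23 l hl hql h23l hwl hw2l hsl
          rcases avcls l hl hql h12l h13l h23l with rfl | rfl | rfl
          · exact hwl hwe
          · exact hwl hwf
          · exact hw2l hw2g
        · exact C.Lge9 hH1 hH2 hH3 heL hfL hgL hqH1 hqH2 hqH3 hqe hqf hqg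
            h12' h13' heH1.symm hfH1.symm hgH1.symm h23' heH2.symm hfH2.symm hgH2.symm
            heH3.symm hfH3.symm hgH3.symm hef (fun h => hge h.symm) (fun h => hgf h.symm)
      by_cases hE12 : ∃ g', g' ∈ C.L ∧ C.q ∉ g' ∧ g' ≠ H1 ∧ g' ≠ H2 ∧ v12 ∈ g'
      · obtain ⟨ev, hevL, hqev, hevH1, hevH2, hv12ev⟩ := hE12
        have hevH3 : ev ≠ H3 := by rintro rfl; exact hv12H3 hv12ev
        by_cases hE13 : ∃ g', g' ∈ C.L ∧ C.q ∉ g' ∧ g' ≠ H1 ∧ g' ≠ H3 ∧ v13 ∈ g'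
        · exfalso
          obtain ⟨ev', hev'L, hqev', hev'H1, hev'H3, hv13ev'⟩ := hE13
          have hev'H2 : ev' ≠ H2 := by rintro rfl; exact hv13H2 hv13ev'
          have hv1213 : v12 ≠ v13 := by rintro rfl; exact hv12H3 hv13H3
          exact hkill ev ev' v12 v13 H1 hH1 hv12H1 hv13H1 hv1213
            hevL hqev hv12ev hevH1 hevH2 hevH3 hv12e hv12f hv12g
            hev'L hqev' hv13ev' hev'H1 hev'H2 hev'H3 hv13e hv13f hv13g hevH1 hev'H1
        by_cases hE23 : ∃ g', g' ∈ C.L ∧ C.q ∉ g' ∧ g' ≠ H2 ∧ g' ≠ H3 ∧ v23 ∈ g'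
        · exfalso
          obtain ⟨ev', hev'L, hqev', hev'H2, hev'H3, hv23ev'⟩ := hE23
          have hev'H1 : ev' ≠ H1 := by rintro rfl; exact hv23H1 hv23ev'
          have hv1223 : v12 ≠ v23 := by rintro rfl; exact hv12H3 hv23H3
          exact hkill ev ev' v12 v23 H2 hH2 hv12H2 hv23H2 hv1223
            hevL hqev hv12ev hevH1 hevH2 hevH3 hv12e hv12f hv12g
            hev'L hqev' hv23ev' hev'H1 hev'H2 hev'H3 hv23e hv23f hv23g hevH2 hev'H2
        obtain ⟨s, hs'⟩ := hmeet H3 ev hH3 hqH3 hevL hqev (fun h => hevH3 h.symm)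
        obtain ⟨hsH3, hsev⟩ := mem_inter.1 hs'
        refine covfin s hsH3 ?_ ?_ ?_
        · intro l hl hql h12l hwl hw2l hsl
          have hlH1 : l ≠ H1 := by rintro rfl; exact hwl hwH1
          have hlH2 : l ≠ H2 := by rintro rfl; exact hw2l hw2H2
          have : l = ev := by
            by_contra hlev
            exact C.degfour hH1 hH2 hevL hl h12' hevH1.symm (fun h => hlH1 h.symm)
              hevH2.symm (fun h => hlH2 h.symm) (fun h => hlev h.symm)
              hv12H1 hv12H2 hv12ev h12l
          exact hsl (this ▸ hsev)
        · intro l hl hql h13l hwl hw2l hsl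
          have hlH1 : l ≠ H1 := by rintro rfl; exact hwl hwH1
          have hlH3 : l ≠ H3 := by rintro rfl; exact hsl hsH3
          exact hE13 ⟨l, hl, hql, hlH1, hlH3, h13l⟩
        · intro l hl hql h23l hwl hw2l hsl
          have hlH2 : l ≠ H2 := by rintro rfl; exact hw2l hw2H2
          have hlH3 : l ≠ H3 := by rintro rfl; exact hsl hsH3
          exact hE23 ⟨l, hl, hql, hlH2, hlH3, h23l⟩
      · by_cases hE13 : ∃ g', g' ∈ C.L ∧ C.q ∉ g' ∧ g' ≠ H1 ∧ g' ≠ H3 ∧ v13 ∈ g'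
        · obtain ⟨ev, hevL, hqev, hevH1, hevH3, hv13ev⟩ := hE13
          have hevH2 : ev ≠ H2 := by rintro rfl; exact hv13H2 hv13ev
          by_cases hE23 : ∃ g', g' ∈ C.L ∧ C.q ∉ g' ∧ g' ≠ H2 ∧ g' ≠ H3 ∧ v23 ∈ g'
          · exfalso
            obtain ⟨ev', hev'L, hqev', hev'H2, hev'H3, hv23ev'⟩ := hE23
            have hev'H1 : ev' ≠ H1 := by rintro rfl; exact hv23H1 hv23ev'
            have hv1323 : v13 ≠ v23 := by rintro rfl; exact hv13H2 hv23H2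
            exact hkill ev ev' v13 v23 H3 hH3 hv13H3 hv23H3 hv1323
              hevL hqev hv13ev hevH1 hevH2 hevH3 hv13e hv13f hv13g
              hev'L hqev' hv23ev' hev'H1 hev'H2 hev'H3 hv23e hv23f hv23g hevH3 hev'H3
          obtain ⟨s, hs'⟩ := hmeet H3 ev hH3 hqH3 hevL hqev (fun h => hevH3 h.symm)
          obtain ⟨hsH3, hsev⟩ := mem_inter.1 hs'
          refine covfin s hsH3 ?_ ?_ ?_
          · intro l hl hql h12l hwl hw2l hsl
            have hlH1 : l ≠ H1 := by rintro rfl; exact hwl hwH1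
            have hlH2 : l ≠ H2 := by rintro rfl; exact hw2l hw2H2
            exact hE12 ⟨l, hl, hql, hlH1, hlH2, h12l⟩
          · intro l hl hql h13l hwl hw2l hsl
            have hlH1 : l ≠ H1 := by rintro rfl; exact hwl hwH1
            have hlH3 : l ≠ H3 := by rintro rfl; exact hsl hsH3
            have : l = ev := by
              by_contra hlev
              exact C.degfour hH1 hH3 hevL hl h13' hevH1.symm (fun h => hlH1 h.symm)
                hevH3.symm (fun h => hlH3 h.symm) (fun h => hlev h.symm)
                hv13H1 hv13H3 hv13ev h13l
            exact hsl (this ▸ hsev)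
          · intro l hl hql h23l hwl hw2l hsl
            have hlH2 : l ≠ H2 := by rintro rfl; exact hw2l hw2H2
            have hlH3 : l ≠ H3 := by rintro rfl; exact hsl hsH3
            exact hE23 ⟨l, hl, hql, hlH2, hlH3, h23l⟩
        · by_cases hE23 : ∃ g', g' ∈ C.L ∧ C.q ∉ g' ∧ g' ≠ H2 ∧ g' ≠ H3 ∧ v23 ∈ g'
          · obtain ⟨ev, hevL, hqev, hevH2, hevH3, hv23ev⟩ := hE23
            obtain ⟨s, hs'⟩ := hmeet H3 ev hH3 hqH3 hevL hqev (fun h => hevH3 h.symm)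
            obtain ⟨hsH3, hsev⟩ := mem_inter.1 hs'
            refine covfin s hsH3 ?_ ?_ ?_
            · intro l hl hql h12l hwl hw2l hsl
              have hlH1 : l ≠ H1 := by rintro rfl; exact hwl hwH1
              have hlH2 : l ≠ H2 := by rintro rfl; exact hw2l hw2H2
              exact hE12 ⟨l, hl, hql, hlH1, hlH2, h12l⟩
            · intro l hl hql h13l hwl hw2l hsl
              have hlH1 : l ≠ H1 := by rintro rfl; exact hwl hwH1
              have hlH3 : l ≠ H3 := by rintro rfl; exact hsl hsH3
              exact hE13 ⟨l, hl, hql, hlH1, hlH3, h13l⟩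
            · intro l hl hql h23l hwl hw2l hsl
              have hlH2 : l ≠ H2 := by rintro rfl; exact hw2l hw2H2
              have hlH3 : l ≠ H3 := by rintro rfl; exact hsl hsH3
              have : l = ev := by
                by_contra hlev
                exact C.degfour hH2 hH3 hevL hl h23' hevH2.symm (fun h => hlH2 h.symm)
                  hevH3.symm (fun h => hlH3 h.symm) (fun h => hlev h.symm)
                  hv23H2 hv23H3 hv23ev h23l
              exact hsl (this ▸ hsev)
          · obtain ⟨s, hsH3⟩ := C.nem hH3
            refine covfin s hsH3 ?_ ?_ ?_
            · intro l hl hql h12l hwl hw2l hsl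
              have hlH1 : l ≠ H1 := by rintro rfl; exact hwl hwH1
              have hlH2 : l ≠ H2 := by rintro rfl; exact hw2l hw2H2
              exact hE12 ⟨l, hl, hql, hlH1, hlH2, h12l⟩
            · intro l hl hql h13l hwl hw2l hsl
              have hlH1 : l ≠ H1 := by rintro rfl; exact hwl hwH1
              have hlH3 : l ≠ H3 := by rintro rfl; exact hsl hsH3
              exact hE13 ⟨l, hl, hql, hlH1, hlH3, h13l⟩
            · intro l hl hql h23l hwl hw2l hsl
              have hlH2 : l ≠ H2 := by rintro rfl; exact hw2l hw2H2
              have hlH3 : l ≠ H3 := by rintro rfl; exact hsl hsH3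
              exact hE23 ⟨l, hl, hql, hlH2, hlH3, h23l⟩
    have samehost : ∀ li : Finset α, li ∈ C.L → e ≠ li → w ∈ li → w2 ∈ li → False := by
      intro li hliL heli hwli hw2li
      have hsing : e ∩ li = {w} := C.inter_eq heL hliL heli hwe hwli
      have : w2 = w := by
        have : w2 ∈ e ∩ li := mem_inter.2 ⟨hw2e, hw2li⟩
        rw [hsing] at this; exact mem_singleton.1 this
      exact hww2 this.symm
    rcases hw123 with hwh | hwh | hwh <;> rcases hw2123 with hw2h | hw2h | hw2h
    · exact absurd (samehost l1 hl1 hel1 hwh hw2h) (fun h => h)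
    · exact fin3 l1 l2 l3 a b c hl1 hl2 hl3 hq1 hq2 hq3 hne12 hne13 hne23
        ha1 ha2 hal3 hb1 hb3 hbl2 hc2 hc3 hcl1
        hae haf hag hbe hbf hbg hce hcf hcg hwh hw2h
        (fun l hl hql h1 h2 h3 => avthree l hl hql h1 h2 h3)
        (fun ga gb va vb J hJL hvaJ hvbJ hvab hgaL hqga hvaga hga1 hga2 hga3
          hvae hvaf hvag hgbL hqgb hvbgb hgb1 hgb2 hgb3 hvbe hvbf hvbg hgaJ hgbJ =>
          killtwo J ga gb va vb hJL hvaJ hvbJ hvab hgaL hqga hvaga hga1 hga2 hga3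
            hvae hvaf hvag hgbL hqgb hvbgb hgb1 hgb2 hgb3 hvbe hvbf hvbg hgaJ hgbJ)
    · exact fin3 l1 l3 l2 b a c hl1 hl3 hl2 hq1 hq3 hq2 hne13 hne12 hne23.symm
        hb1 hb3 hbl2 ha1 ha2 hal3 hc3 hc2 hcl1
        hbe hbf hbg hae haf hag hce hcf hcg hwh hw2h
        (fun l hl hql h1 h2 h3 => avthree l hl hql h2 h1 h3)
        (fun ga gb va vb J hJL hvaJ hvbJ hvab hgaL hqga hvaga hga1 hga2 hga3
          hvae hvaf hvag hgbL hqgb hvbgb hgb1 hgb2 hgb3 hvbe hvbf hvbg hgaJ hgbJ =>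
          killtwo J ga gb va vb hJL hvaJ hvbJ hvab hgaL hqga hvaga hga1 hga3 hga2
            hvae hvaf hvag hgbL hqgb hvbgb hgb1 hgb3 hgb2 hvbe hvbf hvbg hgaJ hgbJ)
    · exact fin3 l2 l1 l3 a c b hl2 hl1 hl3 hq2 hq1 hq3 hne12.symm hne23 hne13
        ha2 ha1 hal3 hc2 hc3 hcl1 hb1 hb3 hbl2
        hae haf hag hce hcf hcg hbe hbf hbg hwh hw2h
        (fun l hl hql h1 h2 h3 => avthree l hl hql h1 h3 h2)
        (fun ga gb va vb J hJL hvaJ hvbJ hvab hgaL hqga hvaga hga1 hga2 hga3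
          hvae hvaf hvag hgbL hqgb hvbgb hgb1 hgb2 hgb3 hvbe hvbf hvbg hgaJ hgbJ =>
          killtwo J ga gb va vb hJL hvaJ hvbJ hvab hgaL hqga hvaga hga2 hga1 hga3
            hvae hvaf hvag hgbL hqgb hvbgb hgb2 hgb1 hgb3 hvbe hvbf hvbg hgaJ hgbJ)
    · exact absurd (samehost l2 hl2 hel2 hwh hw2h) (fun h => h)
    · exact fin3 l2 l3 l1 c a b hl2 hl3 hl1 hq2 hq3 hq1 hne23 hne12.symm hne13.symm
        hc2 hc3 hcl1 ha2 ha1 hal3 hb3 hb1 hbl2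
        hce hcf hcg hae haf hag hbe hbf hbg hwh hw2h
        (fun l hl hql h1 h2 h3 => avthree l hl hql h2 h3 h1)
        (fun ga gb va vb J hJL hvaJ hvbJ hvab hgaL hqga hvaga hga1 hga2 hga3
          hvae hvaf hvag hgbL hqgb hvbgb hgb1 hgb2 hgb3 hvbe hvbf hvbg hgaJ hgbJ =>
          killtwo J ga gb va vb hJL hvaJ hvbJ hvab hgaL hqga hvaga hga3 hga1 hga2
            hvae hvaf hvag hgbL hqgb hvbgb hgb3 hgb1 hgb2 hvbe hvbf hvbg hgaJ hgbJ)
    · exact fin3 l3 l1 l2 b c a hl3 hl1 hl2 hq3 hq1 hq2 hne13.symm hne23.symm hne12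
        hb3 hb1 hbl2 hc3 hc2 hcl1 ha1 ha2 hal3
        hbe hbf hbg hce hcf hcg hae haf hag hwh hw2h
        (fun l hl hql h1 h2 h3 => avthree l hl hql h3 h1 h2)
        (fun ga gb va vb J hJL hvaJ hvbJ hvab hgaL hqga hvaga hga1 hga2 hga3
          hvae hvaf hvag hgbL hqgb hvbgb hgb1 hgb2 hgb3 hvbe hvbf hvbg hgaJ hgbJ =>
          killtwo J ga gb va vb hJL hvaJ hvbJ hvab hgaL hqga hvaga hga2 hga3 hga1
            hvae hvaf hvag hgbL hqgb hvbgb hgb2 hgb3 hgb1 hvbe hvbf hvbg hgaJ hgbJ)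
    · exact fin3 l3 l2 l1 c b a hl3 hl2 hl1 hq3 hq2 hq1 hne23.symm hne13.symm hne12.symm
        hc3 hc2 hcl1 hb3 hb1 hbl2 ha2 ha1 hal3
        hce hcf hcg hbe hbf hbg hae haf hag hwh hw2h
        (fun l hl hql h1 h2 h3 => avthree l hl hql h3 h2 h1)
        (fun ga gb va vb J hJL hvaJ hvbJ hvab hgaL hqga hvaga hga1 hga2 hga3
          hvae hvaf hvag hgbL hqgb hvbgb hgb1 hgb2 hgb3 hvbe hvbf hvbg hgaJ hgbJ =>
          killtwo J ga gb va vb hJL hvaJ hvbJ hvab hgaL hqga hvaga hga3 hga2 hga1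
            hvae hvaf hvag hgbL hqgb hvbgb hgb3 hgb2 hgb1 hvbe hvbf hvbg hgaJ hgbJ)
    · exact absurd (samehost l3 hl3 hel3 hwh hw2h) (fun h => h)
  -- four avoiders e, f, g, h4
  obtain ⟨h4, ⟨hhL, hqh, hah, hbh, hch⟩, hhe, hhf, hhg⟩ := hav4
  have hhl1 : h4 ≠ l1 := by rintro rfl; exact hah ha1
  have hhl2 : h4 ≠ l2 := by rintro rfl; exact hah ha2
  have hhl3 : h4 ≠ l3 := by rintro rfl; exact hbh hb3
  have collide : ∀ (x y y' : Finset α) (wy wy' : α) (li : Finset α),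
      x ∈ C.L → C.q ∉ x → a ∉ x → b ∉ x → c ∉ x →
      y ∈ C.L → C.q ∉ y → a ∉ y → b ∉ y → c ∉ y →
      y' ∈ C.L → C.q ∉ y' → a ∉ y' → b ∉ y' → c ∉ y' →
      y ≠ y' → x ≠ y → x ≠ y' → (li = l1 ∨ li = l2 ∨ li = l3) →
      wy ∈ x → wy ∈ y → wy ∈ li → wy' ∈ x → wy' ∈ y' → wy' ∈ li → False := by
    intro x y y' wy wy' li hxL hqx hax' hbx' hcx' hyL hqy hay' hby' hcy'
      hy'L hqy' hay2 hby2 hcy2 hyy' hxy hxy' hlior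
      hwyx hwyy hwyli hwy'x hwy'y' hwy'li
    have nxl1 : x ≠ l1 := by rintro rfl; exact hax' ha1
    have nxl2 : x ≠ l2 := by rintro rfl; exact hax' ha2
    have nxl3 : x ≠ l3 := by rintro rfl; exact hbx' hb3
    have hliL : li ∈ C.L := by rcases hlior with rfl | rfl | rfl; exacts [hl1, hl2, hl3]
    have hxli : x ≠ li := by rcases hlior with rfl | rfl | rfl; exacts [nxl1, nxl2, nxl3]
    have hsing : x ∩ li = {wy} := C.inter_eq hxL hliL hxli hwyx hwyli
    have heq : wy' = wy := by
      have : wy' ∈ x ∩ li := mem_inter.2 ⟨hwy'x, hwy'li⟩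
      rw [hsing] at this; exact mem_singleton.1 this
    subst heq
    exact avkey y y' x hyL hqy hay' hby' hcy' hy'L hqy' hay2 hby2 hcy2 hyy'
      hxL hxy hxy' nxl1 nxl2 nxl3 wy' hwyy hwy'y' hwy'x
  have noext : ∀ l, l ∈ C.L → C.q ∉ l → l ≠ l1 → l ≠ l2 → l ≠ l3 →
      (a ∈ l ∨ b ∈ l ∨ c ∈ l) → False := by
    intro l hl hql hll1 hll2 hll3 hv
    have hle : l ≠ e := by rintro rfl; rcases hv with h | h | h; exacts [hae h, hbe h, hce h]
    have hlf : l ≠ f := by rintro rfl; rcases hv with h | h | h; exacts [haf h, hbf h, hcf h]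
    have hlg : l ≠ g := by rintro rfl; rcases hv with h | h | h; exacts [hag h, hbg h, hcg h]
    have hlh : l ≠ h4 := by rintro rfl; rcases hv with h | h | h; exacts [hah h, hbh h, hch h]
    refine C.no5 heL hfL hgL hhL hl hef (fun h => hge h.symm) (fun h => hhe h.symm) hle.symm
      (fun h => hgf h.symm) (fun h => hhf h.symm) hlf.symm (fun h => hhg h.symm) hlg.symm
      hlh.symm ?_ ?_ ?_ ?_ ?_ ?_ ?_ ?_ ?_ ?_
    · exact fun x h1 h2 h3 => avkey e f g heL hqe hae hbe hce hfL hqf haf hbf hcf hef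
        hgL hge hgf hgl1 hgl2 hgl3 x h1 h2 h3
    · exact fun x h1 h2 h3 => avkey e f h4 heL hqe hae hbe hce hfL hqf haf hbf hcf hef
        hhL hhe hhf hhl1 hhl2 hhl3 x h1 h2 h3
    · exact fun x h1 h2 h3 => avkey e f l heL hqe hae hbe hce hfL hqf haf hbf hcf hef
        hl hle hlf hll1 hll2 hll3 x h1 h2 h3
    · exact fun x h1 h2 h3 => avkey e g h4 heL hqe hae hbe hce hgL hqg hag hbg hcg
        (fun h => hge h.symm) hhL hhe hhg hhl1 hhl2 hhl3 x h1 h2 h3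
    · exact fun x h1 h2 h3 => avkey e g l heL hqe hae hbe hce hgL hqg hag hbg hcg
        (fun h => hge h.symm) hl hle hlg hll1 hll2 hll3 x h1 h2 h3
    · exact fun x h1 h2 h3 => avkey e h4 l heL hqe hae hbe hce hhL hqh hah hbh hch
        (fun h => hhe h.symm) hl hle hlh hll1 hll2 hll3 x h1 h2 h3
    · exact fun x h1 h2 h3 => avkey f g h4 hfL hqf haf hbf hcf hgL hqg hag hbg hcg
        (fun h => hgf h.symm) hhL hhf hhg hhl1 hhl2 hhl3 x h1 h2 h3
    · exact fun x h1 h2 h3 => avkey f g l hfL hqf haf hbf hcf hgL hqg hag hbg hcg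
        (fun h => hgf h.symm) hl hlf hlg hll1 hll2 hll3 x h1 h2 h3
    · exact fun x h1 h2 h3 => avkey f h4 l hfL hqf haf hbf hcf hhL hqh hah hbh hch
        (fun h => hhf h.symm) hl hlf hlh hll1 hll2 hll3 x h1 h2 h3
    · exact fun x h1 h2 h3 => avkey g h4 l hgL hqg hag hbg hcg hhL hqh hah hbh hch
        (fun h => hhg h.symm) hl hlg hlh hll1 hll2 hll3 x h1 h2 h3
  -- no fifth avoider
  have avfour : ∀ l, l ∈ C.L → C.q ∉ l → a ∉ l → b ∉ l → c ∉ l →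
      l = e ∨ l = f ∨ l = g ∨ l = h4 := by
    intro x hx hqx hax' hbx' hcx'
    by_contra hcon
    push_neg at hcon
    obtain ⟨hxe, hxf, hxg, hxh⟩ := hcon
    obtain ⟨wE, hwEx, hwEe, horE⟩ := host x e hx hqx hax' hbx' hcx' heL hqe hae hbe hce hxe
    obtain ⟨wF, hwFx, hwFf, horF⟩ := host x f hx hqx hax' hbx' hcx' hfL hqf haf hbf hcf hxf
    obtain ⟨wG, hwGx, hwGg, horG⟩ := host x g hx hqx hax' hbx' hcx' hgL hqg hag hbg hcg hxg
    obtain ⟨wH, hwHx, hwHh, horH⟩ := host x h4 hx hqx hax' hbx' hcx' hhL hqh hah hbh hch hxh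
    have colEF : ∀ li : Finset α, (li = l1 ∨ li = l2 ∨ li = l3) → wE ∈ li → wF ∈ li →
        False := fun li hor h1 h2 => collide x e f wE wF li hx hqx hax' hbx' hcx'
      heL hqe hae hbe hce hfL hqf haf hbf hcf hef hxe hxf hor hwEx hwEe h1 hwFx hwFf h2
    have colEG : ∀ li : Finset α, (li = l1 ∨ li = l2 ∨ li = l3) → wE ∈ li → wG ∈ li →
        False := fun li hor h1 h2 => collide x e g wE wG li hx hqx hax' hbx' hcx'
      heL hqe hae hbe hce hgL hqg hag hbg hcg (fun h => hge h.symm) hxe hxg hor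
      hwEx hwEe h1 hwGx hwGg h2
    have colEH : ∀ li : Finset α, (li = l1 ∨ li = l2 ∨ li = l3) → wE ∈ li → wH ∈ li →
        False := fun li hor h1 h2 => collide x e h4 wE wH li hx hqx hax' hbx' hcx'
      heL hqe hae hbe hce hhL hqh hah hbh hch (fun h => hhe h.symm) hxe hxh hor
      hwEx hwEe h1 hwHx hwHh h2
    have colFG : ∀ li : Finset α, (li = l1 ∨ li = l2 ∨ li = l3) → wF ∈ li → wG ∈ li →
        False := fun li hor h1 h2 => collide x f g wF wG li hx hqx hax' hbx' hcx'
      hfL hqf haf hbf hcf hgL hqg hag hbg hcg (fun h => hgf h.symm) hxf hxg hor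
      hwFx hwFf h1 hwGx hwGg h2
    have colFH : ∀ li : Finset α, (li = l1 ∨ li = l2 ∨ li = l3) → wF ∈ li → wH ∈ li →
        False := fun li hor h1 h2 => collide x f h4 wF wH li hx hqx hax' hbx' hcx'
      hfL hqf haf hbf hcf hhL hqh hah hbh hch (fun h => hhf h.symm) hxf hxh hor
      hwFx hwFf h1 hwHx hwHh h2
    have colGH : ∀ li : Finset α, (li = l1 ∨ li = l2 ∨ li = l3) → wG ∈ li → wH ∈ li →
        False := fun li hor h1 h2 => collide x g h4 wG wH li hx hqx hax' hbx' hcx'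
      hgL hqg hag hbg hcg hhL hqh hah hbh hch (fun h => hhg h.symm) hxg hxh hor
      hwGx hwGg h1 hwHx hwHh h2
    rcases horE with hE | hE | hE <;> rcases horF with hF | hF | hF <;>
      rcases horG with hG | hG | hG <;> rcases horH with hH | hH | hH <;>
      first
        | exact colEF l1 (Or.inl rfl) hE hF
        | exact colEF l2 (Or.inr (Or.inl rfl)) hE hF
        | exact colEF l3 (Or.inr (Or.inr rfl)) hE hF
        | exact colEG l1 (Or.inl rfl) hE hG
        | exact colEG l2 (Or.inr (Or.inl rfl)) hE hG
        | exact colEG l3 (Or.inr (Or.inr rfl)) hE hG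
        | exact colEH l1 (Or.inl rfl) hE hH
        | exact colEH l2 (Or.inr (Or.inl rfl)) hE hH
        | exact colEH l3 (Or.inr (Or.inr rfl)) hE hH
        | exact colFG l1 (Or.inl rfl) hF hG
        | exact colFG l2 (Or.inr (Or.inl rfl)) hF hG
        | exact colFG l3 (Or.inr (Or.inr rfl)) hF hG
        | exact colFH l1 (Or.inl rfl) hF hH
        | exact colFH l2 (Or.inr (Or.inl rfl)) hF hH
        | exact colFH l3 (Or.inr (Or.inr rfl)) hF hH
        | exact colGH l1 (Or.inl rfl) hG hH
        | exact colGH l2 (Or.inr (Or.inl rfl)) hG hH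
        | exact colGH l3 (Or.inr (Or.inr rfl)) hG hH
  -- pairing: the (e,f)-host also hosts (g,h4)
  obtain ⟨u2, hu2e, hu2g, horEG⟩ := host e g heL hqe hae hbe hce hgL hqg hag hbg hcg
    (fun h => hge h.symm)
  obtain ⟨u3, hu3e, hu3h, horEH⟩ := host e h4 heL hqe hae hbe hce hhL hqh hah hbh hch
    (fun h => hhe h.symm)
  obtain ⟨w3, hw3g, hw3h, horGH⟩ := host g h4 hgL hqg hag hbg hcg hhL hqh hah hbh hch
    (fun h => hhg h.symm)
  have colA : ∀ li : Finset α, (li = l1 ∨ li = l2 ∨ li = l3) → w ∈ li → u2 ∈ li →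
      False := fun li hor h1 h2 => collide e f g w u2 li heL hqe hae hbe hce
    hfL hqf haf hbf hcf hgL hqg hag hbg hcg (fun h => hgf h.symm) hef
    (fun h => hge h.symm) hor hwe hwf h1 hu2e hu2g h2
  have colB : ∀ li : Finset α, (li = l1 ∨ li = l2 ∨ li = l3) → w ∈ li → u3 ∈ li →
      False := fun li hor h1 h2 => collide e f h4 w u3 li heL hqe hae hbe hce
    hfL hqf haf hbf hcf hhL hqh hah hbh hch (fun h => hhf h.symm) hef
    (fun h => hhe h.symm) hor hwe hwf h1 hu3e hu3h h2
  have colC : ∀ li : Finset α, (li = l1 ∨ li = l2 ∨ li = l3) → u2 ∈ li → u3 ∈ li →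
      False := fun li hor h1 h2 => collide e g h4 u2 u3 li heL hqe hae hbe hce
    hgL hqg hag hbg hcg hhL hqh hah hbh hch (fun h => hhg h.symm)
    (fun h => hge h.symm) (fun h => hhe h.symm) hor hu2e hu2g h1 hu3e hu3h h2
  have colD : ∀ li : Finset α, (li = l1 ∨ li = l2 ∨ li = l3) → u2 ∈ li → w3 ∈ li →
      False := fun li hor h1 h2 => collide g e h4 u2 w3 li hgL hqg hag hbg hcg
    heL hqe hae hbe hce hhL hqh hah hbh hch (fun h => hhe h.symm) hge (fun h => hhg h.symm)
    hor hu2g hu2e h1 hw3g hw3h h2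
  have colE : ∀ li : Finset α, (li = l1 ∨ li = l2 ∨ li = l3) → u3 ∈ li → w3 ∈ li →
      False := fun li hor h1 h2 => collide h4 e g u3 w3 li hhL hqh hah hbh hch
    heL hqe hae hbe hce hgL hqg hag hbg hcg (fun h => hge h.symm)
    hhe hhg hor hu3h hu3e h1 hw3h hw3g h2
  obtain ⟨li, hor, hwli, hw3li⟩ : ∃ li, (li = l1 ∨ li = l2 ∨ li = l3) ∧ w ∈ li ∧
      w3 ∈ li := by
    rcases hw123 with hA | hA | hA <;> rcases horEG with hB | hB | hB <;>
      rcases horEH with hC | hC | hC <;> rcases horGH with hD | hD | hD <;>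
      first
        | exact ⟨l1, Or.inl rfl, hA, hD⟩
        | exact ⟨l2, Or.inr (Or.inl rfl), hA, hD⟩
        | exact ⟨l3, Or.inr (Or.inr rfl), hA, hD⟩
        | exact (colA l1 (Or.inl rfl) hA hB).elim
        | exact (colA l2 (Or.inr (Or.inl rfl)) hA hB).elim
        | exact (colA l3 (Or.inr (Or.inr rfl)) hA hB).elim
        | exact (colB l1 (Or.inl rfl) hA hC).elim
        | exact (colB l2 (Or.inr (Or.inl rfl)) hA hC).elim
        | exact (colB l3 (Or.inr (Or.inr rfl)) hA hC).elim
        | exact (colC l1 (Or.inl rfl) hB hC).elim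
        | exact (colC l2 (Or.inr (Or.inl rfl)) hB hC).elim
        | exact (colC l3 (Or.inr (Or.inr rfl)) hB hC).elim
        | exact (colD l1 (Or.inl rfl) hB hD).elim
        | exact (colD l2 (Or.inr (Or.inl rfl)) hB hD).elim
        | exact (colD l3 (Or.inr (Or.inr rfl)) hB hD).elim
        | exact (colE l1 (Or.inl rfl) hC hD).elim
        | exact (colE l2 (Or.inr (Or.inl rfl)) hC hD).elim
        | exact (colE l3 (Or.inr (Or.inr rfl)) hC hD).elim
  have hq9 : 9 ≤ C.L.card :=
    C.Lge9 hl1 hl2 hl3 heL hfL hgL hq1 hq2 hq3 hqe hqf hqg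
      hne12 hne13 hel1.symm hfl1.symm hgl1.symm hne23 hel2.symm hfl2.symm hgl2.symm
      hel3.symm hfl3.symm hgl3.symm hef (fun h => hge h.symm) (fun h => hgf h.symm)
  have covk4 : ∀ s : α, s ∈ C.P →
      (∀ l, l ∈ C.L → C.q ∉ l → w ∉ l → w3 ∉ l → s ∉ l →
        (a ∈ l ∨ b ∈ l ∨ c ∈ l) → False) →
      (C.r + 1) * tau C.P C.L ≤ C.P.card + C.L.card := by
    intro s hsP hvert
    refine C.cover3 (C.hsub _ heL hwe) (C.hsub _ hgL hw3g) hsP ?_ hq9 hp14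
    intro l hl hql
    by_cases hwl : w ∈ l
    · exact Or.inl hwl
    by_cases hw3l : w3 ∈ l
    · exact Or.inr (Or.inl hw3l)
    by_cases hsl : s ∈ l
    · exact Or.inr (Or.inr hsl)
    exfalso
    by_cases hal : a ∈ l
    · exact hvert l hl hql hwl hw3l hsl (Or.inl hal)
    by_cases hbl : b ∈ l
    · exact hvert l hl hql hwl hw3l hsl (Or.inr (Or.inl hbl))
    by_cases hcl : c ∈ l
    · exact hvert l hl hql hwl hw3l hsl (Or.inr (Or.inr hcl))
    rcases avfour l hl hql hal hbl hcl with rfl | rfl | rfl | rfl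
    exacts [hwl hwe, hwl hwf, hw3l hw3g, hw3l hw3h]
  rcases hor with hli | hli | hli
  · -- host is l1 : third point c
    have hwli' : w ∈ l1 := hli ▸ hwli
    refine covk4 c (C.hsub _ hl2 hc2) ?_
    intro l hl hql hwl hw3l hsl hv
    have hll1 : l ≠ l1 := by rintro rfl; exact hwl hwli'
    have hll2 : l ≠ l2 := by rintro rfl; exact hsl hc2
    have hll3 : l ≠ l3 := by rintro rfl; exact hsl hc3
    exact noext l hl hql hll1 hll2 hll3 hv
  · -- host is l2 : third point b
    have hwli' : w ∈ l2 := hli ▸ hwli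
    refine covk4 b (C.hsub _ hl1 hb1) ?_
    intro l hl hql hwl hw3l hsl hv
    have hll1 : l ≠ l1 := by rintro rfl; exact hsl hb1
    have hll2 : l ≠ l2 := by rintro rfl; exact hwl hwli'
    have hll3 : l ≠ l3 := by rintro rfl; exact hsl hb3
    exact noext l hl hql hll1 hll2 hll3 hv
  · -- host is l3 : third point a
    have hwli' : w ∈ l3 := hli ▸ hwli
    refine covk4 a (C.hsub _ hl1 ha1) ?_
    intro l hl hql hwl hw3l hsl hv
    have hll1 : l ≠ l1 := by rintro rfl; exact hsl ha1
    have hll2 : l ≠ l2 := by rintro rfl; exact hsl ha2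
    have hll3 : l ≠ l3 := by rintro rfl; exact hwl hwli'
    exact noext l hl hql hll1 hll2 hll3 hv





lemma Cfg.main : (C.r + 1) * tau C.P C.L ≤ C.P.card + C.L.card := by
  by_cases hA : ∃ u v : Finset α, (u ∈ C.L ∧ C.q ∉ u) ∧ (v ∈ C.L ∧ C.q ∉ v) ∧ u ∩ v = ∅
  · obtain ⟨u, v, ⟨hu, hqu⟩, ⟨hv, hqv⟩, hdisj⟩ := hA
    exact C.caseA hu hv hqu hqv hdisj
  by_cases hcp : ∃ x, x ∈ C.P ∧ ∀ l ∈ C.L, C.q ∉ l → x ∈ l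
  · obtain ⟨x, hxP, hx⟩ := hcp
    exact C.cover2 hxP hxP (fun l hl hql => Or.inl (hx l hl hql))
  · refine C.caseB ?_ hcp
    intro u v hu hqu hv hqv _
    rw [Finset.nonempty_iff_ne_empty]
    intro h
    exact hA ⟨u, v, ⟨hu, hqu⟩, ⟨hv, hqv⟩, h⟩

end Stmt10

/-- Any `r`-uniform linear system (`r ≥ 2`) with `ν₂ = 4` and `Δ = 3`
satisfies `(r+1)·τ ≤ |P| + |ℒ|`. -/
theorem stmt10 {α : Type*} [DecidableEq α] (P : Finset α) (L : Finset (Finset α))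
    (r : ℕ) (hr : 2 ≤ r) (hLS : IsLinearSystem P L)
    (huniform : ∀ l ∈ L, l.card = r) (hν : nu2 L = 4) (hΔ : maxDegree P L = 3) :
    (r + 1) * tau P L ≤ P.card + L.card := by
  classical
  obtain ⟨hne, hsub, hlin⟩ := hLS
  have hPne : P.Nonempty := by
    rcases Finset.eq_empty_or_nonempty P with h | h
    · exfalso
      rw [h] at hΔ
      simp [maxDegree] at hΔ
    · exact h
  obtain ⟨q, hqP, hq⟩ := Finset.exists_mem_eq_sup P hPne (degree L)
  have hdeg3 : (L.filter fun l => q ∈ l).card = 3 := by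
    have h3 : degree L q = 3 := by
      rw [show degree L q = maxDegree P L from hq.symm, hΔ]
    exact h3
  obtain ⟨m1, m2, m3, h12, h13, h23, hfil⟩ := Finset.card_eq_three.1 hdeg3
  have hm1 : m1 ∈ L ∧ q ∈ m1 := by
    have : m1 ∈ L.filter fun l => q ∈ l := by rw [hfil]; simp
    exact Finset.mem_filter.1 this
  have hm2 : m2 ∈ L ∧ q ∈ m2 := by
    have : m2 ∈ L.filter fun l => q ∈ l := by rw [hfil]; simp
    exact Finset.mem_filter.1 this
  have hm3 : m3 ∈ L ∧ q ∈ m3 := by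
    have : m3 ∈ L.filter fun l => q ∈ l := by rw [hfil]; simp
    exact Finset.mem_filter.1 this
  have pencil : ∀ l ∈ L, q ∈ l → l = m1 ∨ l = m2 ∨ l = m3 := by
    intro l hl hql
    have : l ∈ L.filter fun l => q ∈ l := Finset.mem_filter.2 ⟨hl, hql⟩
    rw [hfil] at this
    simpa using this
  exact Stmt10.Cfg.main ⟨P, L, r, hr, hne, hsub, hlin, huniform, hν, hΔ, q, m1, m2, m3,
    hm1.1, hm2.1, hm3.1, hm1.2, hm2.2, hm3.2, h12, h13, h23, pencil⟩
end

section
/- Let r ≥ 2 and let (P,ℒ) be an r-uniform linear system with 2-packing number ν₂ = 4 and maximum degree Δ = 4. Then (r+1)·τ ≤ |P| + |ℒ| (equivalently, τ ≤ (|P| + |ℒ|)/(r+1)), where τ is the transversal number. -/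
open Finset

section Aux
variable {α : Type*} [DecidableEq α]

lemma tau_le_card {P : Finset α} {L : Finset (Finset α)} {T : Finset α}
    (hT : IsTransversal P L T) : tau P L ≤ T.card :=
  Nat.sInf_le ⟨T, hT, rfl⟩

lemma tau_attained {P : Finset α} {L : Finset (Finset α)}
    (h : ∀ l ∈ L, l.Nonempty) (h2 : ∀ l ∈ L, l ⊆ P) :
    ∃ T, IsTransversal P L T ∧ T.card = tau P L := by
  have hne : {n | ∃ T : Finset α, IsTransversal P L T ∧ T.card = n}.Nonempty :=
    ⟨P.card, P, ⟨subset_rfl, fun l hl => by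
      rw [inter_eq_right.2 (h2 l hl)]; exact h l hl⟩, rfl⟩
  exact Nat.sInf_mem hne

lemma auxPick (P : Finset α) (M : Finset (Finset α))
    (hne : ∀ l ∈ M, l.Nonempty) (hsub : ∀ l ∈ M, l ⊆ P) :
    ∃ T : Finset α, T ⊆ P ∧ (∀ l ∈ M, (T ∩ l).Nonempty) ∧ T.card ≤ M.card := by
  classical
  refine ⟨M.attach.image (fun l => (hne l.1 l.2).choose), ?_, ?_, ?_⟩
  · intro p hp
    simp only [mem_image, mem_attach, true_and] at hp
    obtain ⟨l, rfl⟩ := hp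
    exact hsub l.1 l.2 (hne l.1 l.2).choose_spec
  · intro l hl
    exact ⟨(hne l hl).choose, mem_inter.2 ⟨mem_image.2 ⟨⟨l, hl⟩, mem_attach _ _, rfl⟩,
      (hne l hl).choose_spec⟩⟩
  · calc _ ≤ M.attach.card := card_image_le
      _ = M.card := card_attach

lemma auxPair (P : Finset α) : ∀ (n : ℕ) (M : Finset (Finset α)), M.card = n →
    (∀ l ∈ M, l ⊆ P) → (∀ l ∈ M, ∀ l' ∈ M, (l ∩ l').Nonempty) →
    ∃ T : Finset α, T ⊆ P ∧ (∀ l ∈ M, (T ∩ l).Nonempty) ∧ 2 * T.card ≤ M.card + 1 := by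
  intro n
  induction n using Nat.strong_induction_on with
  | _ n ih =>
    intro M hcard hsub hint
    rcases Nat.lt_or_ge n 2 with h2 | h2
    · rcases Nat.lt_or_ge n 1 with h1 | h1
      · have hM : M = ∅ := card_eq_zero.1 (by omega)
        subst hM
        exact ⟨∅, empty_subset _, by simp, by simp⟩
      · obtain ⟨l, hM⟩ := card_eq_one.1 (by omega : M.card = 1)
        subst hM
        obtain ⟨p, hp⟩ := hint l (mem_singleton_self l) l (mem_singleton_self l)
        rw [inter_self] at hp
        refine ⟨{p}, by simp [hsub l (mem_singleton_self l) hp], ?_, by simp⟩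
        intro l' hl'
        rw [mem_singleton] at hl'
        subst hl'
        exact ⟨p, by simp [hp]⟩
    · obtain ⟨l₁, hl₁, l₂, hl₂, hne⟩ := one_lt_card.1 (by omega : 1 < M.card)
      obtain ⟨p, hp⟩ := hint l₁ hl₁ l₂ hl₂
      have hl₂' : l₂ ∈ M.erase l₁ := mem_erase.2 ⟨Ne.symm hne, hl₂⟩
      have hM'card : ((M.erase l₁).erase l₂).card = n - 2 := by
        rw [card_erase_of_mem hl₂', card_erase_of_mem hl₁, hcard]
        omega
      have hsub' : (M.erase l₁).erase l₂ ⊆ M := (erase_subset _ _).trans (erase_subset _ _)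
      obtain ⟨T', hT'P, hT'cov, hT'card⟩ := ih (n-2) (by omega) ((M.erase l₁).erase l₂) hM'card
        (fun l hl => hsub l (hsub' hl)) (fun l hl l' hl' => hint l (hsub' hl) l' (hsub' hl'))
      refine ⟨insert p T', ?_, ?_, ?_⟩
      · intro q hq
        rcases mem_insert.1 hq with rfl | hq
        · exact hsub l₁ hl₁ (mem_inter.1 hp).1
        · exact hT'P hq
      · intro l hl
        by_cases h1 : l = l₁
        · exact ⟨p, mem_inter.2 ⟨mem_insert_self _ _, h1 ▸ (mem_inter.1 hp).1⟩⟩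
        by_cases h2' : l = l₂
        · exact ⟨p, mem_inter.2 ⟨mem_insert_self _ _, h2' ▸ (mem_inter.1 hp).2⟩⟩
        obtain ⟨q, hq⟩ := hT'cov l (mem_erase.2 ⟨h2', mem_erase.2 ⟨h1, hl⟩⟩)
        exact ⟨q, mem_inter.2 ⟨mem_insert_of_mem (mem_inter.1 hq).1, (mem_inter.1 hq).2⟩⟩
      · have := card_insert_le p T'
        rw [hM'card] at hT'card
        omega

end Aux

section Aux2
variable {α : Type*} [DecidableEq α]

set_option maxHeartbeats 3000000 in
lemma auxFive {P : Finset α} {L : Finset (Finset α)} (hLS : IsLinearSystem P L)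
    (hpack : ∀ R, Is2Packing L R → R.card ≤ 4)
    {x : α} {a b c d e : Finset α}
    (ha : a ∈ L) (hb : b ∈ L) (hc : c ∈ L) (hd : d ∈ L) (he : e ∈ L)
    (hxa : x ∈ a) (hxb : x ∈ b) (hxc : x ∉ c) (hxd : x ∉ d) (hxe : x ∉ e)
    (hab : a ≠ b) (hcd : c ≠ d) (hce : c ≠ e) (hde : d ≠ e) :
    ∃ p, ((p ∈ a ∨ p ∈ b) ∧ ((p ∈ c ∧ p ∈ d) ∨ (p ∈ c ∧ p ∈ e) ∨ (p ∈ d ∧ p ∈ e)))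
      ∨ (p ∈ c ∧ p ∈ d ∧ p ∈ e) := by
  classical
  have hac : a ≠ c := fun h => hxc (h ▸ hxa)
  have had : a ≠ d := fun h => hxd (h ▸ hxa)
  have hae : a ≠ e := fun h => hxe (h ▸ hxa)
  have hbc : b ≠ c := fun h => hxc (h ▸ hxb)
  have hbd : b ≠ d := fun h => hxd (h ▸ hxb)
  have hbe : b ≠ e := fun h => hxe (h ▸ hxb)
  have habx : ∀ q, q ∈ a → q ∈ b → q = x := by
    intro q hqa hqb
    have h1 := hLS.2.2 a ha b hb hab
    exact card_le_one.1 h1 q (mem_inter.2 ⟨hqa, hqb⟩) x (mem_inter.2 ⟨hxa, hxb⟩)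
  set R : Finset (Finset α) := insert a (insert b (insert c (insert d {e}))) with hR
  have hRL : R ⊆ L := by
    intro l hl
    simp only [hR, mem_insert, mem_singleton] at hl
    rcases hl with rfl|rfl|rfl|rfl|rfl <;> assumption
  have hRcard : R.card = 5 := by
    rw [hR, card_insert_of_notMem (by simp [mem_insert, hab, hac, had, hae]),
        card_insert_of_notMem (by simp [mem_insert, hbc, hbd, hbe]),
        card_insert_of_notMem (by simp [mem_insert, hcd, hce]),
        card_insert_of_notMem (by simp [hde]), card_singleton]
  have hnp : ¬ Is2Packing L R := fun h => by have := hpack R h; omega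
  rw [Is2Packing] at hnp
  push_neg at hnp
  obtain ⟨m₁, hm₁, m₂, hm₂, m₃, hm₃, h12, h13, h23, hineq⟩ := hnp hRL
  obtain ⟨p, hp⟩ := id hineq
  rw [mem_inter, mem_inter] at hp
  obtain ⟨⟨hp1, hp2⟩, hp3⟩ := hp
  simp only [hR, mem_insert, mem_singleton] at hm₁ hm₂ hm₃
  clear hRcard hRL hineq hnp
  clear_value R
  clear hR R
  rcases hm₁ with rfl|rfl|rfl|rfl|rfl <;> rcases hm₂ with rfl|rfl|rfl|rfl|rfl <;>
    rcases hm₃ with rfl|rfl|rfl|rfl|rfl <;>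
    first
      | exact absurd rfl h12
      | exact absurd rfl h13
      | exact absurd rfl h23
      | (refine ⟨p, ?_⟩; tauto)
      | (have hpx : p = x := habx p (by assumption) (by assumption); subst hpx; tauto)

lemma auxCore {P : Finset α} {L : Finset (Finset α)} (hLS : IsLinearSystem P L)
    (hpack : ∀ R, Is2Packing L R → R.card ≤ 4)
    {x : α} {A : Finset (Finset α)} (hAL : A ⊆ L) (hAx : ∀ a ∈ A, x ∈ a) (hA4 : A.card = 4)
    {l l' l'' : Finset α} (hl : l ∈ L) (hl' : l' ∈ L) (hl'' : l'' ∈ L)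
    (hxl : x ∉ l) (hxl' : x ∉ l') (hxl'' : x ∉ l'')
    (hne1 : l ≠ l') (hne2 : l ≠ l'') (hne3 : l' ≠ l'') :
    ∃ p, p ∈ l ∩ l' ∧ ((∃ a ∈ A, p ∈ a) ∨ p ∈ l'') := by
  classical
  set s : Finset α := (l ∪ l') ∩ l'' with hs
  have hscard : s.card ≤ 2 := by
    have h1 : s = (l ∩ l'') ∪ (l' ∩ l'') := by rw [hs, union_inter_distrib_right]
    have h2 := hLS.2.2 l hl l'' hl'' hne2
    have h3 := hLS.2.2 l' hl' l'' hl'' hne3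
    calc s.card ≤ (l ∩ l'').card + (l' ∩ l'').card := by
          rw [h1]; exact card_union_le _ _
      _ ≤ 2 := by omega
  have hxs : x ∉ s := fun h => hxl'' (mem_inter.1 h).2
  have key : ∀ q ∈ s, (A.filter (fun a => q ∈ a)).card ≤ 1 := by
    intro q hq
    refine card_le_one.2 ?_
    intro a1 ha1 a2 ha2
    rw [mem_filter] at ha1 ha2
    by_contra hne
    have h1 := hLS.2.2 a1 (hAL ha1.1) a2 (hAL ha2.1) hne
    have hqx : q = x := card_le_one.1 h1 q (mem_inter.2 ⟨ha1.2, ha2.2⟩) x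
      (mem_inter.2 ⟨hAx a1 ha1.1, hAx a2 ha2.1⟩)
    exact hxs (hqx ▸ hq)
  set Abad := A.filter (fun a => (s ∩ a).Nonempty) with hAbad
  have hAbadcard : Abad.card ≤ 2 := by
    have hsub : Abad ⊆ s.biUnion (fun q => A.filter (fun a => q ∈ a)) := by
      intro a ha
      rw [hAbad, mem_filter] at ha
      obtain ⟨q, hq⟩ := ha.2
      exact mem_biUnion.2 ⟨q, (mem_inter.1 hq).1, mem_filter.2 ⟨ha.1, (mem_inter.1 hq).2⟩⟩
    calc Abad.card ≤ _ := card_le_card hsub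
      _ ≤ ∑ q ∈ s, (A.filter (fun a => q ∈ a)).card := card_biUnion_le
      _ ≤ s.card • 1 := sum_le_card_nsmul _ _ _ key
      _ ≤ 2 := by simp only [smul_eq_mul, mul_one]; exact hscard
  have hgood : 1 < (A \ Abad).card := by
    have hss : Abad ⊆ A := filter_subset _ _
    have := card_sdiff_of_subset hss
    omega
  obtain ⟨a, ha, b, hb, hne⟩ := one_lt_card.1 hgood
  have haA : a ∈ A := (mem_sdiff.1 ha).1
  have hbA : b ∈ A := (mem_sdiff.1 hb).1
  have hsa : s ∩ a = ∅ := not_nonempty_iff_eq_empty.1 (fun h =>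
    (mem_sdiff.1 ha).2 (mem_filter.2 ⟨haA, h⟩))
  have hsb : s ∩ b = ∅ := not_nonempty_iff_eq_empty.1 (fun h =>
    (mem_sdiff.1 hb).2 (mem_filter.2 ⟨hbA, h⟩))
  obtain ⟨p, hp⟩ := auxFive hLS hpack (hAL haA) (hAL hbA) hl hl' hl''
    (hAx a haA) (hAx b hbA) hxl hxl' hxl'' hne hne1 hne2 hne3
  rcases hp with ⟨hpab, htwo⟩ | ⟨h1, h2, h3⟩
  · rcases htwo with ⟨h1, h2⟩ | ⟨h1, h2⟩ | ⟨h1, h2⟩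
    · refine ⟨p, mem_inter.2 ⟨h1, h2⟩, Or.inl ?_⟩
      rcases hpab with h | h
      exacts [⟨a, haA, h⟩, ⟨b, hbA, h⟩]
    · exfalso
      have hps : p ∈ s := mem_inter.2 ⟨mem_union_left _ h1, h2⟩
      rcases hpab with h | h
      · exact (eq_empty_iff_forall_notMem.1 hsa p) (mem_inter.2 ⟨hps, h⟩)
      · exact (eq_empty_iff_forall_notMem.1 hsb p) (mem_inter.2 ⟨hps, h⟩)
    · exfalso
      have hps : p ∈ s := mem_inter.2 ⟨mem_union_right _ h1, h2⟩
      rcases hpab with h | h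
      · exact (eq_empty_iff_forall_notMem.1 hsa p) (mem_inter.2 ⟨hps, h⟩)
      · exact (eq_empty_iff_forall_notMem.1 hsb p) (mem_inter.2 ⟨hps, h⟩)
  · exact ⟨p, mem_inter.2 ⟨h1, h2⟩, Or.inr h3⟩

end Aux2

/-- Any `r`-uniform linear system (`r ≥ 2`) with `ν₂ = 4` and `Δ = 4`
satisfies `(r+1)·τ ≤ |P| + |ℒ|`. -/
theorem stmt11 {α : Type*} [DecidableEq α] (P : Finset α) (L : Finset (Finset α))
    (r : ℕ) (hr : 2 ≤ r) (hLS : IsLinearSystem P L)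
    (huniform : ∀ l ∈ L, l.card = r) (hν : nu2 L = 4) (hΔ : maxDegree P L = 4) :
    (r + 1) * tau P L ≤ P.card + L.card := by
  classical
  -- every 2-packing has at most 4 lines
  have hpack : ∀ R, Is2Packing L R → R.card ≤ 4 := by
    intro R hR
    have hbdd : BddAbove {n | ∃ R' : Finset (Finset α), Is2Packing L R' ∧ R'.card = n} := by
      refine ⟨L.card, ?_⟩
      rintro n ⟨R', hR', rfl⟩
      exact card_le_card hR'.1
    have hmem : R.card ∈ {n | ∃ R' : Finset (Finset α), Is2Packing L R' ∧ R'.card = n} :=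
      ⟨R, hR, rfl⟩
    have hle := le_csSup hbdd hmem
    unfold nu2 at hν
    omega
  -- a point of degree 4
  have hPne : P.Nonempty := by
    rcases P.eq_empty_or_nonempty with h | h
    · exfalso; rw [maxDegree, h] at hΔ; simp at hΔ
    · exact h
  obtain ⟨x, hxP, hxsup⟩ := exists_mem_eq_sup P hPne (degree L)
  have hxdeg : degree L x = 4 := by rw [maxDegree, hxsup] at hΔ; exact hΔ
  set A := L.filter (fun l => x ∈ l) with hA
  set L' := L.filter (fun l => x ∉ l) with hL'
  have hA4 : A.card = 4 := by rw [degree] at hxdeg; exact hxdeg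
  have hsplit : A.card + L'.card = L.card := card_filter_add_card_filter_not _
  have hAL : A ⊆ L := filter_subset _ _
  have hL'L : L' ⊆ L := filter_subset _ _
  have hAx : ∀ a ∈ A, x ∈ a := fun a ha => (mem_filter.1 ha).2
  have hL'x : ∀ l ∈ L', x ∉ l := fun l hl => (mem_filter.1 hl).2
  have habxA : ∀ a ∈ A, ∀ b ∈ A, a ≠ b → ∀ q, q ∈ a → q ∈ b → q = x := by
    intro a ha b hb hne q hqa hqb
    have h1 := hLS.2.2 a (hAL ha) b (hAL hb) hne
    exact card_le_one.1 h1 q (mem_inter.2 ⟨hqa, hqb⟩) x (mem_inter.2 ⟨hAx a ha, hAx b hb⟩)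
  set UA := A.biUnion id with hUA
  have hUAP : UA ⊆ P := by
    intro p hp
    obtain ⟨a, haA, hpa⟩ := mem_biUnion.1 hp
    exact hLS.2.1 a (hAL haA) hpa
  have hUAcard : 4*(r-1)+1 ≤ UA.card := by
    have hEA : (A.biUnion (fun a => a.erase x)).card = 4*(r-1) := by
      rw [card_biUnion]
      · calc ∑ a ∈ A, (a.erase x).card = ∑ _a ∈ A, (r-1) := by
              refine sum_congr rfl (fun a ha => ?_)
              rw [card_erase_of_mem (hAx a ha), huniform a (hAL ha)]
          _ = 4*(r-1) := by rw [sum_const, hA4, smul_eq_mul]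
      · intro a ha b hb hne
        refine disjoint_left.2 (fun q hq hq' => ?_)
        have h1 := mem_erase.1 hq
        have h2 := mem_erase.1 hq'
        exact h1.1 (habxA a ha b hb hne q h1.2 h2.2)
    have hxnot : x ∉ A.biUnion (fun a => a.erase x) := by
      intro h
      obtain ⟨a, _, h⟩ := mem_biUnion.1 h
      exact (mem_erase.1 h).1 rfl
    have hsub2 : insert x (A.biUnion (fun a => a.erase x)) ⊆ UA := by
      intro q hq
      rcases mem_insert.1 hq with rfl | hq
      · obtain ⟨a, haA⟩ : A.Nonempty := card_pos.1 (by omega)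
        exact mem_biUnion.2 ⟨a, haA, hAx a haA⟩
      · obtain ⟨a, ha, hq⟩ := mem_biUnion.1 hq
        exact mem_biUnion.2 ⟨a, ha, (erase_subset _ _) hq⟩
    calc 4*(r-1)+1 = (insert x (A.biUnion fun a => a.erase x)).card := by
          rw [card_insert_of_notMem hxnot, hEA]
      _ ≤ UA.card := card_le_card hsub2
  have hP1 : 4*(r-1)+1 ≤ P.card := le_trans hUAcard (card_le_card hUAP)
  have hm4 : 4 ≤ L.card := hA4 ▸ card_le_card hAL
  rcases Nat.lt_or_ge (tau P L) 4 with ht3 | ht4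
  · -- easy case : τ ≤ 3
    calc (r+1) * tau P L ≤ (r+1)*3 := Nat.mul_le_mul_left _ (by omega)
      _ ≤ P.card + L.card := by omega
  · -- hard case : τ ≥ 4
    set t := tau P L with ht
    set t' := tau P L' with ht'
    have hL'ne : ∀ l ∈ L', l.Nonempty := fun l hl => hLS.1 l (hL'L hl)
    have hL'P : ∀ l ∈ L', l ⊆ P := fun l hl => hLS.2.1 l (hL'L hl)
    obtain ⟨T', hT', hT'card⟩ := tau_attained hL'ne hL'P
    have f1 : t ≤ t' + 1 := by
      have htr : IsTransversal P L (insert x T') := by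
        constructor
        · intro q hq
          rcases mem_insert.1 hq with rfl | hq
          exacts [hxP, hT'.1 hq]
        · intro l hl
          by_cases hxmem : x ∈ l
          · exact ⟨x, mem_inter.2 ⟨mem_insert_self _ _, hxmem⟩⟩
          · obtain ⟨q, hq⟩ := hT'.2 l (mem_filter.2 ⟨hl, hxmem⟩)
            exact ⟨q, mem_inter.2 ⟨mem_insert_of_mem (mem_inter.1 hq).1, (mem_inter.1 hq).2⟩⟩
      calc t ≤ (insert x T').card := tau_le_card htr
        _ ≤ T'.card + 1 := card_insert_le _ _
        _ = t' + 1 := by rw [hT'card]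
    have f2 : 3 ≤ t' := by omega
    have hkt' : t' ≤ L'.card := by
      obtain ⟨T, hTP, hTcov, hTcard⟩ := auxPick P L' hL'ne hL'P
      exact le_trans (tau_le_card ⟨hTP, hTcov⟩) hTcard
    have hInt : ∀ l ∈ L', ∀ l' ∈ L', (l ∩ l').Nonempty := by
      intro l hl l' hl'
      by_cases hne : l = l'
      · subst hne
        rw [inter_self]
        exact hL'ne l hl
      · have hne3 : ((L'.erase l).erase l').Nonempty := by
          rw [← card_pos, card_erase_of_mem (mem_erase.2 ⟨Ne.symm hne, hl'⟩),
              card_erase_of_mem hl]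
          omega
        obtain ⟨l'', hl''⟩ := hne3
        have h2 := mem_erase.1 hl''
        have h3 := mem_erase.1 h2.2
        obtain ⟨p, hp, _⟩ := auxCore hLS hpack hAL hAx hA4 (hL'L hl) (hL'L hl') (hL'L h3.2)
          (hL'x l hl) (hL'x l' hl') (hL'x _ h3.2) hne (Ne.symm h3.1) (Ne.symm h2.1)
        exact ⟨p, hp⟩
    have f4 : 2 * t' ≤ L'.card + 1 := by
      obtain ⟨T, hTP, hTcov, hTcard⟩ := auxPair P L'.card L' rfl hL'P hInt
      have := tau_le_card (⟨hTP, hTcov⟩ : IsTransversal P L' T)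
      omega
    have f3 : t' ≤ r := by
      obtain ⟨l₀, hl₀⟩ : L'.Nonempty := card_pos.1 (by omega)
      have htr : IsTransversal P L' l₀ := by
        refine ⟨hL'P l₀ hl₀, fun l hl => ?_⟩
        obtain ⟨p, hp⟩ := hInt l hl l₀ hl₀
        exact ⟨p, mem_inter.2 ⟨(mem_inter.1 hp).2, (mem_inter.1 hp).1⟩⟩
      have := tau_le_card htr
      rwa [huniform l₀ (hL'L hl₀)] at this
    have hYUA : ∀ l ∈ L', ∀ l' ∈ L', l ≠ l' → ∀ y, y ∈ l → y ∈ l' → y ∈ UA := by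
      intro l hl l' hl' hne y hyl hyl'
      by_contra hyUA
      have hex : ∃ l'' ∈ L', y ∉ l'' := by
        by_contra hall
        push_neg at hall
        have htr : IsTransversal P L' {y} := by
          refine ⟨by simp [hL'P l hl hyl], fun m hm => ?_⟩
          exact ⟨y, mem_inter.2 ⟨mem_singleton_self y, hall m hm⟩⟩
        have := tau_le_card htr
        simp at this
        omega
      obtain ⟨l'', hl'', hyl''⟩ := hex
      have hne2 : l ≠ l'' := fun h => hyl'' (h ▸ hyl)
      have hne3 : l' ≠ l'' := fun h => hyl'' (h ▸ hyl')
      obtain ⟨p, hp, hor⟩ := auxCore hLS hpack hAL hAx hA4 (hL'L hl) (hL'L hl') (hL'L hl'')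
        (hL'x _ hl) (hL'x _ hl') (hL'x _ hl'') hne hne2 hne3
      have hpy : p = y := by
        have h1 := hLS.2.2 l (hL'L hl) l' (hL'L hl') hne
        exact card_le_one.1 h1 p hp y (mem_inter.2 ⟨hyl, hyl'⟩)
      subst hpy
      rcases hor with ⟨a, haA, hpa⟩ | hpl''
      · exact hyUA (mem_biUnion.2 ⟨a, haA, hpa⟩)
      · exact hyl'' hpl''
    -- counting
    set S := ∑ l ∈ L', (l \ UA).card with hS
    have f5 : 4*(r-1)+1 + S ≤ P.card := by
      have hdisj : ∀ l ∈ L', ∀ l' ∈ L', l ≠ l' → Disjoint (l \ UA) (l' \ UA) := by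
        intro l hl l' hl' hne
        refine disjoint_left.2 fun q hq hq' => ?_
        have h1 := mem_sdiff.1 hq
        have h2 := mem_sdiff.1 hq'
        exact h1.2 (hYUA l hl l' hl' hne q h1.1 h2.1)
      have hbu : (L'.biUnion (fun l => l \ UA)).card = S := card_biUnion hdisj
      have hdisj2 : Disjoint UA (L'.biUnion (fun l => l \ UA)) := by
        refine disjoint_right.2 fun q hq hq' => ?_
        obtain ⟨l, hl, hq⟩ := mem_biUnion.1 hq
        exact (mem_sdiff.1 hq).2 hq'
      have hsubP2 : UA ∪ L'.biUnion (fun l => l \ UA) ⊆ P := by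
        refine union_subset hUAP ?_
        intro q hq
        obtain ⟨l, hl, hq⟩ := mem_biUnion.1 hq
        exact hL'P l hl (mem_sdiff.1 hq).1
      have := card_union_of_disjoint hdisj2
      have hc := card_le_card hsubP2
      omega
    have hterm : ∀ l ∈ L', r - 4 ≤ (l \ UA).card := by
      intro l hl
      have hinter : (l ∩ UA).card ≤ 4 := by
        have hsub3 : l ∩ UA ⊆ A.biUnion (fun a => l ∩ a) := by
          intro q hq
          obtain ⟨hql, hqUA⟩ := mem_inter.1 hq
          obtain ⟨a, haA, hqa⟩ := mem_biUnion.1 hqUA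
          exact mem_biUnion.2 ⟨a, haA, mem_inter.2 ⟨hql, hqa⟩⟩
        calc (l ∩ UA).card ≤ (A.biUnion (fun a => l ∩ a)).card := card_le_card hsub3
          _ ≤ ∑ a ∈ A, (l ∩ a).card := card_biUnion_le
          _ ≤ A.card • 1 := sum_le_card_nsmul _ _ _ (fun a ha =>
              hLS.2.2 l (hL'L hl) a (hAL ha) (fun h => hL'x l hl (h ▸ hAx a ha)))
          _ ≤ 4 := by rw [hA4]; simp
      have hics := card_inter_add_card_sdiff l UA
      have hcl := huniform l (hL'L hl)
      omega
    rcases Nat.lt_or_ge r 5 with hr5 | hr5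
    · -- r ∈ {3, 4}
      have hr3 : 3 ≤ r := le_trans f2 f3
      interval_cases r
      · omega
      · by_cases ht'4 : 4 ≤ t'
        · -- refinement: some line of L' misses some line of A
          obtain ⟨a₁, ha₁⟩ : A.Nonempty := card_pos.1 (by omega)
          have hex : ∃ ls ∈ L', ∀ q ∈ a₁.erase x, q ∉ ls := by
            by_contra hall
            push_neg at hall
            have htr : IsTransversal P L' (a₁.erase x) := by
              refine ⟨(erase_subset _ _).trans (hLS.2.1 a₁ (hAL ha₁)), fun l hl => ?_⟩
              obtain ⟨q, hq1, hq2⟩ := hall l hl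
              exact ⟨q, mem_inter.2 ⟨hq1, hq2⟩⟩
            have h5 := tau_le_card htr
            rw [card_erase_of_mem (hAx a₁ ha₁), huniform a₁ (hAL ha₁)] at h5
            omega
          obtain ⟨ls, hls, hlsq⟩ := hex
          have hlsa : ls ∩ a₁ = ∅ := by
            rw [eq_empty_iff_forall_notMem]
            intro q hq
            obtain ⟨h1, h2⟩ := mem_inter.1 hq
            by_cases hqx : q = x
            · exact hL'x ls hls (hqx ▸ h1)
            · exact hlsq q (mem_erase.2 ⟨hqx, h2⟩) h1
          have hinter3 : (ls ∩ UA).card ≤ 3 := by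
            have hsub3 : ls ∩ UA ⊆ (A.erase a₁).biUnion (fun a => ls ∩ a) := by
              intro q hq
              obtain ⟨hql, hqUA⟩ := mem_inter.1 hq
              obtain ⟨a, haA, hqa⟩ := mem_biUnion.1 hqUA
              have hane : a ≠ a₁ := by
                rintro rfl
                exact (eq_empty_iff_forall_notMem.1 hlsa q) (mem_inter.2 ⟨hql, hqa⟩)
              exact mem_biUnion.2 ⟨a, mem_erase.2 ⟨hane, haA⟩, mem_inter.2 ⟨hql, hqa⟩⟩
            calc (ls ∩ UA).card ≤ _ := card_le_card hsub3
              _ ≤ ∑ a ∈ A.erase a₁, (ls ∩ a).card := card_biUnion_le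
              _ ≤ (A.erase a₁).card • 1 := sum_le_card_nsmul _ _ _ (fun a ha =>
                  hLS.2.2 ls (hL'L hls) a (hAL ((erase_subset _ _) ha))
                    (fun h => hL'x ls hls (h ▸ hAx a ((erase_subset _ _) ha))))
              _ ≤ 3 := by rw [card_erase_of_mem ha₁, hA4]; simp
          have hstar : 1 ≤ (ls \ UA).card := by
            have hics := card_inter_add_card_sdiff ls UA
            have hcl := huniform ls (hL'L hls)
            omega
          have hS1 : 1 ≤ S := le_trans hstar
            (single_le_sum (f := fun l => (l \ UA).card) (fun _ _ => Nat.zero_le _) hls)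
          omega
        · omega
    · -- r ≥ 5
      obtain ⟨q, rfl⟩ : ∃ q, r = q + 5 := ⟨r - 5, by omega⟩
      have f6 : L'.card * (q+1) ≤ S := by
        have h1 : L'.card • (q+1) ≤ S := card_nsmul_le_sum _ _ _ (fun l hl => by
          have := hterm l hl
          omega)
        simpa using h1
      have H3 : (q+6)*t ≤ (q+6)*(t'+1) := Nat.mul_le_mul_left _ f1
      have H1 : 2*t'*(q+2) ≤ (L'.card+1)*(q+2) := Nat.mul_le_mul_right _ f4
      have hLL : L.card = L'.card + 4 := by omega
      have f5' : 4*q + 17 + S ≤ P.card := by omega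
      have hgoal : (q+5+1)*t ≤ P.card + L.card := by
        nlinarith [H3, H1, f5', f6, hLL, f2, f3]
      exact hgoal
end
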